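/- arXiv:1907.02710 — 6 statements merged into one kernel-verified Lean document; each statement's English description precedes it below -/
import Mathlib

section
/- Let θ = 1, α > 0, t₀ > 0, γ ∈ [1,2] and m ∈ (0, 2γ/(γ+2)). Let x : [t₀, ∞) → ℝⁿ be a solution of the perturbed inertial ODE with damping α/t. Assume that ∫_{t₀}^∞ t^{mα} ‖g(t)‖ dt < ∞ and that F satisfies hypotheses H1(γ) and H2(2) and admits a unique minimizer x*. Then there exist C > 0 and t₁ ≥ t₀ such that for all t ≥ t₁, F(x(t)) − F* ≤ C · t^{−mα}. -/
open MeasureTheory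
open scoped RealInnerProductSpace

theorem convex_grad_ineq {n : ℕ} {F : EuclideanSpace ℝ (Fin n) → ℝ}
    (hconv : ConvexOn ℝ Set.univ F) (hdiff : Differentiable ℝ F)
    (y z : EuclideanSpace ℝ (Fin n)) :
    F y - F z ≤ ⟪gradient F y, y - z⟫ := by
  set c : ℝ → EuclideanSpace ℝ (Fin n) := fun s => y + s • (z - y) with hc
  have hcd : HasDerivAt c (z - y) 0 := by
    have := ((hasDerivAt_id (0:ℝ)).smul_const (z - y)).const_add y
    simp only [id_eq, one_smul] at this
    exact this
  have hψd : HasDerivAt (fun s => F (c s)) ⟪gradient F y, z - y⟫ 0 := by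
    have h := ((hdiff (c 0)).hasGradientAt.hasFDerivAt).comp_hasDerivAt 0 hcd
    have hc0 : c 0 = y := by simp [hc]
    rw [hc0] at h
    rw [InnerProductSpace.toDual_apply_apply] at h
    exact h
  have hslope : ∀ s ∈ Set.Ioo (0:ℝ) 1, (F (c s) - F y) / s ≤ F z - F y := by
    intro s hs
    have hcs : c s = (1 - s) • y + s • z := by
      rw [hc]; module
    have h2 := hconv.2 (Set.mem_univ y) (Set.mem_univ z)
      (by linarith [hs.1, hs.2] : (0:ℝ) ≤ 1 - s) (le_of_lt hs.1) (by ring)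
    rw [← hcs] at h2
    rw [div_le_iff₀ hs.1]
    have : F (c s) ≤ (1 - s) * F y + s * F z := by simpa [smul_eq_mul] using h2
    nlinarith
  have htendsto : Filter.Tendsto (fun s => (F (c s) - F y) / s) (nhdsWithin 0 (Set.Ioi 0))
      (nhds ⟪gradient F y, z - y⟫) := by
    have h := hψd.tendsto_slope_zero_right
    have heq : (fun s => (F (c s) - F y) / s) = fun s : ℝ => s⁻¹ * (F (c s) - F y) := by
      funext s; rw [div_eq_inv_mul]
    rw [heq]
    simpa [hc] using h
  have hle : ⟪gradient F y, z - y⟫ ≤ F z - F y := by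
    apply le_of_tendsto htendsto
    filter_upwards [Ioo_mem_nhdsGT_of_mem (by norm_num : (0:ℝ) ∈ Set.Ico (0:ℝ) 1)] with s hs
    exact hslope s hs
  have heq2 : ⟪gradient F y, z - y⟫ = -⟪gradient F y, y - z⟫ := by
    rw [← inner_neg_right]; congr 1; abel
  linarith [heq2 ▸ hle]

theorem int_bound {φ d ψ : ℝ → ℝ} {T : ℝ}
    (hd : ∀ t ∈ Set.Ici T, HasDerivAt φ (d t) t)
    (hdc : ContinuousOn d (Set.Ici T))
    (hψ : IntegrableOn ψ (Set.Ici T))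
    (hle : ∀ t ∈ Set.Ici T, d t ≤ ψ t)
    (hψ0 : ∀ t ∈ Set.Ici T, 0 ≤ ψ t) :
    ∀ t ∈ Set.Ici T, φ t ≤ φ T + ∫ s in Set.Ici T, ψ s := by
  intro t ht
  have hTt : T ≤ t := ht
  have hIcc : Set.Icc T t ⊆ Set.Ici T := Set.Icc_subset_Ici_self
  have huIcc : Set.uIcc T t ⊆ Set.Ici T := by
    rw [Set.uIcc_of_le hTt]; exact hIcc
  have hdint : IntervalIntegrable d volume T t :=
    (hdc.mono huIcc).intervalIntegrable
  have hψint : IntervalIntegrable ψ volume T t := by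
    rw [intervalIntegrable_iff_integrableOn_Icc_of_le hTt]
    exact hψ.mono_set hIcc
  have hftc : ∫ s in T..t, d s = φ t - φ T := by
    apply intervalIntegral.integral_eq_sub_of_hasDerivAt
    · intro s hs
      exact hd s (huIcc hs)
    · exact hdint
  have h1 : ∫ s in T..t, d s ≤ ∫ s in T..t, ψ s := by
    apply intervalIntegral.integral_mono_on hTt hdint hψint
    intro s hs; exact hle s (hIcc hs)
  have h2 : ∫ s in T..t, ψ s ≤ ∫ s in Set.Ici T, ψ s := by
    rw [intervalIntegral.integral_of_le hTt]
    apply setIntegral_mono_set hψ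
    · exact (ae_restrict_iff' measurableSet_Ici).2 (ae_of_all _ hψ0)
    · exact HasSubset.Subset.eventuallyLE (Set.Ioc_subset_Icc_self.trans hIcc)
  linarith [hftc ▸ h1.trans h2]

theorem quad_lower {a mu : ℝ} (ha : 0 < a) (hmu : a^2 < mu) (u v : ℝ) :
    (mu - a^2)/(2*(1+mu)) * (u^2 + v^2) ≤ u^2/2 - a*u*v + (mu/2)*v^2 := by
  set cQ := (mu - a^2)/(2*(1+mu)) with hcQ
  have hmu1 : 0 < 1 + mu := by nlinarith [sq_nonneg a]
  have h2c : 2*cQ = (mu - a^2)/(1+mu) := by rw [hcQ]; field_simp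
  have hA : 0 < 1 - 2*cQ := by
    rw [h2c]
    have : (mu - a^2)/(1+mu) < 1 := by
      rw [div_lt_one hmu1]; nlinarith [sq_nonneg a]
    linarith
  have hkey : (1 - 2*cQ) * (mu - 2*cQ) - a^2 = (mu - a^2)^2/(1+mu)^2 := by
    rw [h2c]; field_simp; ring
  have hkey' : 0 ≤ (1 - 2*cQ) * (mu - 2*cQ) - a^2 := by
    rw [hkey]; positivity
  nlinarith [sq_nonneg ((1 - 2*cQ)*u - a*v), sq_nonneg v, mul_pos hA hA]

theorem lyap_deriv {n : ℕ} (F : EuclideanSpace ℝ (Fin n) → ℝ) (Fstar : ℝ)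
    (xstar : EuclideanSpace ℝ (Fin n)) (x x' x'' : ℝ → EuclideanSpace ℝ (Fin n))
    (lam a mu : ℝ) (hdiff : Differentiable ℝ F) {t : ℝ} (ht : 0 < t)
    (hxt : HasDerivAt x (x' t) t) (hx't : HasDerivAt x' (x'' t) t) :
    HasDerivAt (fun s => s ^ lam * (F (x s) - Fstar + ⟪x' s, x' s⟫ / 2)
        + a * (s ^ (lam - 1) * ⟪x s - xstar, x' s⟫)
        + (mu / 2) * (s ^ (lam - 2) * ⟪x s - xstar, x s - xstar⟫))
      (lam * t ^ (lam - 1) * (F (x t) - Fstar + ⟪x' t, x' t⟫ / 2)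
        + t ^ lam * (⟪gradient F (x t), x' t⟫ + ⟪x' t, x'' t⟫)
        + a * ((lam - 1) * t ^ (lam - 2) * ⟪x t - xstar, x' t⟫
            + t ^ (lam - 1) * (⟪x' t, x' t⟫ + ⟪x t - xstar, x'' t⟫))
        + (mu / 2) * ((lam - 2) * t ^ (lam - 3) * ⟪x t - xstar, x t - xstar⟫
            + t ^ (lam - 2) * (2 * ⟪x t - xstar, x' t⟫))) t := by
  have hF : HasDerivAt (fun s => F (x s)) ⟪gradient F (x t), x' t⟫ t := by
    have h := ((hdiff (x t)).hasGradientAt.hasFDerivAt).comp_hasDerivAt t hxt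
    rw [InnerProductSpace.toDual_apply_apply] at h
    exact h
  have hxs : HasDerivAt (fun s => x s - xstar) (x' t) t := hxt.sub_const xstar
  have hu : HasDerivAt (fun s => ⟪x' s, x' s⟫) (⟪x' t, x'' t⟫ + ⟪x'' t, x' t⟫) t :=
    hx't.inner ℝ hx't
  have hb : HasDerivAt (fun s => ⟪x s - xstar, x' s⟫) (⟪x t - xstar, x'' t⟫ + ⟪x' t, x' t⟫) t :=
    hxs.inner ℝ hx't
  have hc : HasDerivAt (fun s => ⟪x s - xstar, x s - xstar⟫)
      (⟪x t - xstar, x' t⟫ + ⟪x' t, x t - xstar⟫) t := hxs.inner ℝ hxs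
  have hp1 : HasDerivAt (fun s : ℝ => s ^ lam) (lam * t ^ (lam - 1)) t :=
    Real.hasDerivAt_rpow_const (Or.inl ht.ne')
  have hp2 : HasDerivAt (fun s : ℝ => s ^ (lam - 1)) ((lam - 1) * t ^ (lam - 1 - 1)) t :=
    Real.hasDerivAt_rpow_const (Or.inl ht.ne')
  have hp3 : HasDerivAt (fun s : ℝ => s ^ (lam - 2)) ((lam - 2) * t ^ (lam - 2 - 1)) t :=
    Real.hasDerivAt_rpow_const (Or.inl ht.ne')
  have hE : HasDerivAt (fun s => F (x s) - Fstar + ⟪x' s, x' s⟫ / 2)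
      (⟪gradient F (x t), x' t⟫ + (⟪x' t, x'' t⟫ + ⟪x'' t, x' t⟫) / 2) t :=
    (hF.sub_const Fstar).add (hu.div_const 2)
  have h := ((hp1.mul hE).add ((hp2.mul hb).const_mul a)).add ((hp3.mul hc).const_mul (mu / 2))
  convert h using 1
  · rfl
  · rfl
  · rfl
  have e1 : lam - 1 - 1 = lam - 2 := by ring
  have e2 : lam - 2 - 1 = lam - 3 := by ring
  rw [e1, e2, real_inner_comm (x'' t) (x' t), real_inner_comm (x' t) (x t - xstar)]
  ring

theorem lyap_group {n : ℕ} (X' X'' GF Gt XD : EuclideanSpace ℝ (Fin n))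
    (t lam a α f mu : ℝ) (ht : 0 < t) (hmu : mu = a * (α + 1 - lam))
    (hode' : X'' = Gt - (α / t) • X' - GF) :
    lam * t ^ (lam - 1) * (f + ⟪X', X'⟫ / 2)
      + t ^ lam * (⟪Gt - X'' - (α / t) • X', X'⟫ + ⟪X', X''⟫)
      + a * ((lam - 1) * t ^ (lam - 2) * ⟪XD, X'⟫
          + t ^ (lam - 1) * (⟪X', X'⟫ + ⟪XD, X''⟫))
      + (mu / 2) * ((lam - 2) * t ^ (lam - 3) * ⟪XD, XD⟫
          + t ^ (lam - 2) * (2 * ⟪XD, X'⟫))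
    = t ^ (lam - 1) * (lam * f + (lam / 2 - α + a) * ⟪X', X'⟫ - a * ⟪GF, XD⟫)
      + (mu / 2) * (lam - 2) * t ^ (lam - 3) * ⟪XD, XD⟫
      + t ^ lam * ⟪X', Gt⟫ + a * t ^ (lam - 1) * ⟪XD, Gt⟫ := by
  have e1 : t ^ lam = t ^ (lam - 1) * t := by
    rw [show lam = (lam - 1) + 1 by ring, Real.rpow_add_one ht.ne']
    ring_nf
  have e2 : t ^ (lam - 1) = t ^ (lam - 2) * t := by
    rw [show lam - 1 = (lam - 2) + 1 by ring, Real.rpow_add_one ht.ne']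
  have e3 : t ^ (lam - 2) = t ^ (lam - 3) * t := by
    rw [show lam - 2 = (lam - 3) + 1 by ring, Real.rpow_add_one ht.ne']
  subst hode' hmu
  simp only [inner_sub_left, inner_sub_right, real_inner_smul_left, real_inner_smul_right]
  rw [e1, e2, e3]
  rw [real_inner_comm GF X', real_inner_comm GF XD]
  generalize (⟪X', X'⟫ : ℝ) = A
  generalize (⟪X', Gt⟫ : ℝ) = B
  generalize (⟪X', GF⟫ : ℝ) = C
  generalize (⟪XD, X'⟫ : ℝ) = D
  generalize (⟪XD, Gt⟫ : ℝ) = Q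
  generalize (⟪XD, GF⟫ : ℝ) = R
  generalize (⟪XD, XD⟫ : ℝ) = S
  field_simp
  ring


theorem gronwall_log {φ d ψ : ℝ → ℝ} {T : ℝ}
    (hd : ∀ t ∈ Set.Ici T, HasDerivAt φ (d t) t)
    (hdc : ContinuousOn d (Set.Ici T))
    (hφc : ContinuousOn φ (Set.Ici T))
    (hφnn : ∀ t ∈ Set.Ici T, 0 ≤ φ t)
    (hψ : IntegrableOn ψ (Set.Ici T))
    (hψ0 : ∀ t ∈ Set.Ici T, 0 ≤ ψ t)
    (hle : ∀ t ∈ Set.Ici T, d t ≤ ψ t * (1 + φ t)) :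
    ∀ t ∈ Set.Ici T, φ t ≤ Real.exp (Real.log (1 + φ T) + ∫ s in Set.Ici T, ψ s) - 1 := by
  have hpos : ∀ t ∈ Set.Ici T, (0:ℝ) < 1 + φ t := fun t ht => by linarith [hφnn t ht]
  have hL : ∀ t ∈ Set.Ici T, HasDerivAt (fun s => Real.log (1 + φ s)) (d t / (1 + φ t)) t := by
    intro t ht
    exact ((hd t ht).const_add 1).log (hpos t ht).ne'
  have hLc : ContinuousOn (fun t => d t / (1 + φ t)) (Set.Ici T) :=
    hdc.div (continuousOn_const.add hφc) (fun t ht => (hpos t ht).ne')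
  have hle' : ∀ t ∈ Set.Ici T, d t / (1 + φ t) ≤ ψ t := by
    intro t ht
    rw [div_le_iff₀ (hpos t ht)]
    exact hle t ht
  have h := int_bound hL hLc hψ hle' hψ0
  intro t ht
  have h2 := h t ht
  have h3 : 1 + φ t ≤ Real.exp (Real.log (1 + φ T) + ∫ s in Set.Ici T, ψ s) := by
    calc 1 + φ t = Real.exp (Real.log (1 + φ t)) := (Real.exp_log (hpos t ht)).symm
      _ ≤ _ := Real.exp_le_exp.2 h2
  linarith

theorem lower_outside {n : ℕ} {F : EuclideanSpace ℝ (Fin n) → ℝ}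
    (hconv : ConvexOn ℝ Set.univ F) {Fstar K ε ρ : ℝ}
    {xstar : EuclideanSpace ℝ (Fin n)}
    (hFs : F xstar = Fstar) (hf0 : ∀ y, 0 ≤ F y - Fstar)
    (hH2g : ∀ y : EuclideanSpace ℝ (Fin n), ‖y - xstar‖ < ε → K * ‖y - xstar‖^2 ≤ F y - Fstar)
    (hρ : 0 < ρ) (hρε : ρ < ε) (hK : 0 < K) :
    ∀ y : EuclideanSpace ℝ (Fin n), ρ ≤ ‖y - xstar‖ → K * ρ^2 ≤ F y - Fstar := by
  intro y hy
  have hv : 0 < ‖y - xstar‖ := lt_of_lt_of_le hρ hy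
  set τ := ρ / ‖y - xstar‖ with hτ
  have hτ0 : 0 < τ := div_pos hρ hv
  have hτ1 : τ ≤ 1 := by
    rw [hτ, div_le_one hv]; exact hy
  set z := xstar + τ • (y - xstar) with hz
  have hzn : ‖z - xstar‖ = ρ := by
    rw [hz]
    simp only [add_sub_cancel_left]
    rw [norm_smul, Real.norm_eq_abs, abs_of_pos hτ0, hτ]
    field_simp
  have hzc : z = (1 - τ) • xstar + τ • y := by rw [hz]; module
  have hconvz := hconv.2 (Set.mem_univ xstar) (Set.mem_univ y)
    (by linarith : (0:ℝ) ≤ 1 - τ) hτ0.le (by ring)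
  rw [← hzc] at hconvz
  have hFz : F z ≤ (1 - τ) * F xstar + τ * F y := by simpa [smul_eq_mul] using hconvz
  have hH2z := hH2g z (by rw [hzn]; exact hρε)
  rw [hzn] at hH2z
  have hfy : 0 ≤ F y - Fstar := hf0 y
  have h1 : F z - Fstar ≤ τ * (F y - Fstar) := by
    rw [← hFs]; nlinarith [hFs]
  nlinarith [mul_le_mul_of_nonneg_right hτ1 hfy]


theorem assemble1 {W X Y a : ℝ} (hW : 0 ≤ W) (hX : 0 ≤ X) (hY : 0 ≤ Y) (ha : 0 ≤ a) :
    W*((1+X)/2) + a*(W*((1+Y)/2)) ≤ ((1+a)/2)*(W*(1+(X+Y))) := by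
  nlinarith [mul_nonneg hW hY, mul_nonneg (mul_nonneg ha hW) hX]

theorem one_add_div_le {c φ : ℝ} (hc : 0 < c) (hφ : 0 ≤ φ) :
    1 + φ/c ≤ (1+1/c)*(1+φ) := by
  have hi : 0 ≤ 1/c := by positivity
  have h1 : φ/c = φ*(1/c) := by ring
  rw [h1]
  nlinarith [mul_nonneg hφ hi]

theorem coer_bound {n : ℕ} (A B u v f bb K a2 mu2 s : ℝ)
    (cc : ℝ)
    (hA : 0 < A) (hB : 0 < B)
    (hrel : A*A = B*B*(s*s))
    (hKcc : K*cc ≤ f) (hcc : cc = v^2)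
    (ha2K : a2^2 ≤ K*(s*s))
    (hbb : -(v*u) ≤ bb)
    (ha2 : 0 ≤ a2) (hmu2 : 0 ≤ mu2) :
    A*A*f ≤ 2*(A*A*(f + u^2/2) + a2*((A*B)*bb) + (mu2/2)*((B*B)*cc)) := by
  have h1 : 0 ≤ mu2*(B*B*cc) := by
    have : 0 ≤ cc := by rw [hcc]; positivity
    positivity
  have h2 := mul_le_mul_of_nonneg_left hbb (mul_nonneg ha2 (mul_nonneg hA.le hB.le))
  have h3 := sq_nonneg (A*u - a2*(B*v))
  have h4 : a2^2*(B*B*v^2) ≤ K*(s*s)*(B*B*v^2) :=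
    mul_le_mul_of_nonneg_right ha2K (by positivity)
  have h5 : K*(B*B*(s*s))*v^2 = K*(A*A)*v^2 := by rw [hrel]
  have h7 : (A*A)*(K*v^2) ≤ (A*A)*f := by
    apply mul_le_mul_of_nonneg_left _ (by positivity)
    rw [hcc] at hKcc; linarith
  nlinarith [h1, h2, h3, h4, h7]


theorem neg_quad_bound {P3 cc f K δ mu2 lam s : ℝ}
    (hP3 : 0 < P3) (hcc : 0 ≤ cc) (hKcc : K*cc ≤ f)
    (hlt : mu2*(lam-2) < 2*K*δ*s^2) (hδ : 0 < δ) (hK : 0 < K) :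
    (mu2/2)*(lam-2)*P3*cc ≤ δ*((P3*(s*s))*f) := by
  have h2 : (mu2*(lam-2)) * (P3*cc) ≤ (2*K*δ*s^2) * (P3*cc) :=
    mul_le_mul_of_nonneg_right hlt.le (mul_nonneg hP3.le hcc)
  have h4 : (δ*(s^2*P3)) * (K*cc) ≤ (δ*(s^2*P3)) * f :=
    mul_le_mul_of_nonneg_left hKcc (by positivity)
  nlinarith [h2, h4]

set_option maxHeartbeats 4000000 in
theorem stmt_5
    {n : ℕ} (hn : 1 ≤ n)
    (F : EuclideanSpace ℝ (Fin n) → ℝ) (Fstar : ℝ)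
    (Xstar : Set (EuclideanSpace ℝ (Fin n)))
    (hXstar : Xstar = {z | ∀ y, F z ≤ F y})
    (hne : Xstar.Nonempty)
    (hFstar : ∀ z ∈ Xstar, F z = Fstar)
    (hconv : ConvexOn ℝ Set.univ F)
    (hdiff : Differentiable ℝ F)
    (α t₀ γ m : ℝ) (hα : 0 < α) (ht₀ : 0 < t₀)
    (hγ : 1 ≤ γ) (hγ2 : γ ≤ 2) (hm : 0 < m) (hm2 : m < 2 * γ / (γ + 2))
    (g x x' x'' : ℝ → EuclideanSpace ℝ (Fin n))
    (hg : ContinuousOn g (Set.Ici t₀))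
    (hx : ∀ t ∈ Set.Ici t₀, HasDerivAt x (x' t) t)
    (hx'd : ∀ t ∈ Set.Ici t₀, HasDerivAt x' (x'' t) t)
    (hx''c : ContinuousOn x'' (Set.Ici t₀))
    (hode : ∀ t ∈ Set.Ici t₀, x'' t + (α / t) • x' t + gradient F (x t) = g t)
    (hH1 : ∀ z ∈ Xstar, ∃ η > 0, ∀ y : EuclideanSpace ℝ (Fin n),
      ‖y - z‖ < η → F y - Fstar ≤ (1 / γ) * ⟪gradient F y, y - z⟫)
    (hH2 : ∀ z ∈ Xstar, ∃ K > 0, ∃ ε > 0, ∀ y : EuclideanSpace ℝ (Fin n),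
      ‖y - z‖ < ε → K * Metric.infDist y Xstar ^ (2 : ℝ) ≤ F y - Fstar)
    (xstar : EuclideanSpace ℝ (Fin n)) (huniq : Xstar = {xstar})
    (hint : IntegrableOn (fun t : ℝ => t ^ (m * α) * ‖g t‖) (Set.Ici t₀)) :
    ∃ C > 0, ∃ t₁ ≥ t₀, ∀ t ≥ t₁,
      F (x t) - Fstar ≤ C * t ^ (-(m * α)) := by
  classical
  -- basic facts
  have hxsX : xstar ∈ Xstar := by rw [huniq]; exact Set.mem_singleton _
  have hmin : ∀ y, F xstar ≤ F y := by
    have h := hxsX; rw [hXstar] at h; exact h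
  have hFs : F xstar = Fstar := hFstar xstar hxsX
  have hf0 : ∀ y, 0 ≤ F y - Fstar := fun y => by
    have := hmin y; rw [hFs] at this; linarith
  have hγ0 : (0:ℝ) < γ := by linarith
  have hgi : ∀ y : EuclideanSpace ℝ (Fin n), F y - Fstar ≤ ⟪gradient F y, y - xstar⟫ := by
    intro y
    have h := convex_grad_ineq hconv hdiff y xstar
    rwa [hFs] at h
  obtain ⟨η, hηpos, hH1'⟩ := hH1 xstar hxsX
  have hH1g : ∀ y : EuclideanSpace ℝ (Fin n), ‖y - xstar‖ < η →
      γ * (F y - Fstar) ≤ ⟪gradient F y, y - xstar⟫ := by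
    intro y hy
    have h := hH1' y hy
    have h2 := mul_le_mul_of_nonneg_left h hγ0.le
    rw [← mul_assoc, mul_one_div, div_self hγ0.ne', one_mul] at h2
    exact h2
  obtain ⟨K, hK, ε, hε, hH2'⟩ := hH2 xstar hxsX
  have hH2g : ∀ y : EuclideanSpace ℝ (Fin n), ‖y - xstar‖ < ε →
      K * ‖y - xstar‖^2 ≤ F y - Fstar := by
    intro y hy
    have h := hH2' y hy
    rwa [huniq, Metric.infDist_singleton, dist_eq_norm,
      show (2:ℝ) = ((2:ℕ):ℝ) by norm_num, Real.rpow_natCast] at h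
  -- continuity basics
  have ht0ne : ∀ s ∈ Set.Ici t₀, s ≠ 0 := fun s hs => (lt_of_lt_of_le ht₀ hs).ne'
  have hxc : ContinuousOn x (Set.Ici t₀) :=
    fun s hs => ((hx s hs).continuousAt).continuousWithinAt
  have hx'c : ContinuousOn x' (Set.Ici t₀) :=
    fun s hs => ((hx'd s hs).continuousAt).continuousWithinAt
  have hgradeq : ∀ s ∈ Set.Ici t₀, gradient F (x s) = g s - x'' s - (α/s) • x' s := by
    intro s hs
    have h := hode s hs
    rw [← h]; abel
  have hGc : ContinuousOn (fun s => g s - x'' s - (α/s) • x' s) (Set.Ici t₀) :=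
    (hg.sub hx''c).sub ((continuousOn_const.div continuousOn_id ht0ne).smul hx'c)
  have hrp : ∀ κ : ℝ, ContinuousOn (fun s : ℝ => s ^ κ) (Set.Ici t₀) :=
    fun κ s hs => (Real.continuousAt_rpow_const s κ (Or.inl (ht0ne s hs))).continuousWithinAt
  -- generic Lyapunov functions
  set φgen : ℝ → ℝ → ℝ → ℝ → ℝ := fun lam a mu s =>
      s ^ lam * (F (x s) - Fstar + ⟪x' s, x' s⟫ / 2)
        + a * (s ^ (lam - 1) * ⟪x s - xstar, x' s⟫)
        + (mu / 2) * (s ^ (lam - 2) * ⟪x s - xstar, x s - xstar⟫) with hφgen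
  set dgen : ℝ → ℝ → ℝ → ℝ → ℝ := fun lam a mu s =>
      lam * s ^ (lam - 1) * (F (x s) - Fstar + ⟪x' s, x' s⟫ / 2)
        + s ^ lam * (⟪g s - x'' s - (α/s) • x' s, x' s⟫ + ⟪x' s, x'' s⟫)
        + a * ((lam - 1) * s ^ (lam - 2) * ⟪x s - xstar, x' s⟫
            + s ^ (lam - 1) * (⟪x' s, x' s⟫ + ⟪x s - xstar, x'' s⟫))
        + (mu / 2) * ((lam - 2) * s ^ (lam - 3) * ⟪x s - xstar, x s - xstar⟫
            + s ^ (lam - 2) * (2 * ⟪x s - xstar, x' s⟫)) with hdgen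
  have hderiv : ∀ (lam a mu : ℝ), ∀ s ∈ Set.Ici t₀,
      HasDerivAt (φgen lam a mu) (dgen lam a mu s) s := by
    intro lam a mu s hs
    have hsp : 0 < s := lt_of_lt_of_le ht₀ hs
    have h := lyap_deriv F Fstar xstar x x' x'' lam a mu hdiff hsp (hx s hs) (hx'd s hs)
    rw [hgradeq s hs] at h
    simp only [hφgen, hdgen]
    exact h
  have hdcont : ∀ (lam a mu : ℝ), ContinuousOn (dgen lam a mu) (Set.Ici t₀) := by
    intro lam a mu
    simp only [hdgen]
    have cF : ContinuousOn (fun s => F (x s) - Fstar + ⟪x' s, x' s⟫ / 2) (Set.Ici t₀) :=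
      ((hdiff.continuous.comp_continuousOn hxc).sub continuousOn_const).add
        ((hx'c.inner hx'c).div_const 2)
    have cxd : ContinuousOn (fun s => x s - xstar) (Set.Ici t₀) := hxc.sub continuousOn_const
    apply ContinuousOn.add
    apply ContinuousOn.add
    apply ContinuousOn.add
    · exact (continuousOn_const.mul (hrp _)).mul cF
    · exact (hrp _).mul ((hGc.inner hx'c).add (hx'c.inner hx''c))
    · exact continuousOn_const.mul
        (((continuousOn_const.mul (hrp _)).mul (cxd.inner hx'c)).add
          ((hrp _).mul ((hx'c.inner hx'c).add (cxd.inner hx''c))))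
    · exact continuousOn_const.mul
        (((continuousOn_const.mul (hrp _)).mul (cxd.inner cxd)).add
          ((hrp _).mul (continuousOn_const.mul (cxd.inner hx'c))))
  -- stage 1 parameters
  set lam1 := min (min (α/2) 1) (m*α) with hlam1
  have hl1 : 0 < lam1 := lt_min (lt_min (by linarith) one_pos) (mul_pos hm hα)
  have hl2 : lam1 ≤ α/2 := le_trans (min_le_left _ _) (min_le_left _ _)
  have hl3 : lam1 ≤ 1 := le_trans (min_le_left _ _) (min_le_right _ _)
  have hl4 : lam1 ≤ m*α := min_le_right _ _
  set a1 := (lam1 + (α - lam1/2))/2 with ha1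
  have ha1gt : lam1 < a1 := by rw [ha1]; linarith
  have ha1pos : 0 < a1 := lt_trans hl1 ha1gt
  have ha1le : a1 ≤ α - lam1/2 := by rw [ha1]; linarith
  have ha1lt2 : a1 < α + 1 - lam1 := by
    have : a1 ≤ α - lam1/2 := ha1le
    linarith [hl3]
  set mu1 := a1*(α+1-lam1) with hmu1
  have hmua : a1^2 < mu1 := by
    rw [hmu1, sq]
    exact mul_lt_mul_of_pos_left ha1lt2 ha1pos
  have hmu1pos : 0 < mu1 := lt_of_le_of_lt (sq_nonneg a1) hmua
  set cQ := (mu1 - a1^2)/(2*(1+mu1)) with hcQ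
  have hcQpos : 0 < cQ := div_pos (by linarith) (by linarith)
  set T0 := max t₀ 1 with hT0
  have hT0t₀ : t₀ ≤ T0 := le_max_left _ _
  have hsub0 : Set.Ici T0 ⊆ Set.Ici t₀ := Set.Ici_subset_Ici.2 hT0t₀
  set φ1 := φgen lam1 a1 mu1 with hφ1
  set d1 := dgen lam1 a1 mu1 with hd1
  have hd1d : ∀ s ∈ Set.Ici T0, HasDerivAt φ1 (d1 s) s :=
    fun s hs => hderiv lam1 a1 mu1 s (hsub0 hs)
  have hd1c : ContinuousOn d1 (Set.Ici T0) := (hdcont _ _ _).mono hsub0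
  have hφ1c : ContinuousOn φ1 (Set.Ici T0) :=
    fun s hs => (hd1d s hs).continuousAt.continuousWithinAt
  -- coercivity of φ1
  have hphi1lb : ∀ s ∈ Set.Ici T0, s^lam1 * (F (x s) - Fstar)
      + cQ*(s^lam1 * ‖x' s‖^2 + s^(lam1-2) * ‖x s - xstar‖^2) ≤ φ1 s := by
    intro s hs
    have hsp : 0 < s := lt_of_lt_of_le ht₀ (hsub0 hs)
    have e5 : s^lam1 = s^(lam1/2) * s^(lam1/2) := by
      rw [← Real.rpow_add hsp]; congr 1; ring
    have e6 : s^(lam1-2) = s^(lam1/2-1) * s^(lam1/2-1) := by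
      rw [← Real.rpow_add hsp]; congr 1; ring
    have e7 : s^(lam1-1) = s^(lam1/2) * s^(lam1/2-1) := by
      rw [← Real.rpow_add hsp]; congr 1; ring
    have hApos : 0 < s^(lam1/2) := Real.rpow_pos_of_pos hsp _
    have hBpos : 0 < s^(lam1/2-1) := Real.rpow_pos_of_pos hsp _
    have hquad := quad_lower ha1pos hmua (s^(lam1/2) * ‖x' s‖) (s^(lam1/2-1) * ‖x s - xstar‖)
    rw [← hcQ] at hquad
    have hbb : -(‖x s - xstar‖ * ‖x' s‖) ≤ ⟪x s - xstar, x' s⟫ :=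
      (abs_le.1 (abs_real_inner_le_norm _ _)).1
    have hbb2 := mul_le_mul_of_nonneg_left hbb
      (mul_nonneg (mul_nonneg ha1pos.le hApos.le) hBpos.le)
    have hu2 : (⟪x' s, x' s⟫:ℝ) = ‖x' s‖^2 := real_inner_self_eq_norm_sq _
    have hv2 : (⟪x s - xstar, x s - xstar⟫:ℝ) = ‖x s - xstar‖^2 :=
      real_inner_self_eq_norm_sq _
    simp only [hφ1, hφgen]
    rw [hu2, hv2, e5, e6, e7]
    linarith [hquad, hbb2]
  have hphi1nn : ∀ s ∈ Set.Ici T0, 0 ≤ φ1 s := by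
    intro s hs
    have hsp : 0 < s := lt_of_lt_of_le ht₀ (hsub0 hs)
    have h := hphi1lb s hs
    have h1 : 0 ≤ s^lam1 * (F (x s) - Fstar) :=
      mul_nonneg (Real.rpow_nonneg hsp.le _) (hf0 _)
    have h2 : 0 ≤ cQ*(s^lam1 * ‖x' s‖^2 + s^(lam1-2) * ‖x s - xstar‖^2) := by positivity
    linarith
  -- pointwise differential inequality, stage 1
  set K1 := (1+a1)*(1+1/cQ)/2 with hK1
  have hineq1 : ∀ s ∈ Set.Ici T0, d1 s ≤ K1 * ((s^(m*α) * ‖g s‖) * (1 + φ1 s)) := by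
    intro s hs
    have hst₀ : s ∈ Set.Ici t₀ := hsub0 hs
    have hsp : 0 < s := lt_of_lt_of_le ht₀ hst₀
    have hs1 : 1 ≤ s := le_trans (le_max_right t₀ 1) hs
    have hx''s : x'' s = g s - (α/s) • x' s - gradient F (x s) := by
      rw [← hode s hst₀]; abel
    have hgrp := lyap_group (x' s) (x'' s) (gradient F (x s)) (g s) (x s - xstar) s lam1 a1 α
        (F (x s) - Fstar) mu1 hsp hmu1 hx''s
    have hd1s : d1 s = s ^ (lam1 - 1) * (lam1 * (F (x s) - Fstar)
          + (lam1 / 2 - α + a1) * ⟪x' s, x' s⟫ - a1 * ⟪gradient F (x s), x s - xstar⟫)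
        + (mu1 / 2) * (lam1 - 2) * s ^ (lam1 - 3) * ⟪x s - xstar, x s - xstar⟫
        + s ^ lam1 * ⟪x' s, g s⟫ + a1 * s ^ (lam1 - 1) * ⟪x s - xstar, g s⟫ := by
      simp only [hd1, hdgen]
      exact hgrp
    rw [hd1s]
    have hq : F (x s) - Fstar ≤ ⟪gradient F (x s), x s - xstar⟫ := hgi (x s)
    have hfnn : 0 ≤ F (x s) - Fstar := hf0 _
    have hu2nn : (0:ℝ) ≤ ⟪x' s, x' s⟫ := real_inner_self_nonneg
    have hv2nn : (0:ℝ) ≤ ⟪x s - xstar, x s - xstar⟫ := real_inner_self_nonneg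
    have hP1 : (0:ℝ) < s^(lam1-1) := Real.rpow_pos_of_pos hsp _
    have hP3 : (0:ℝ) < s^(lam1-3) := Real.rpow_pos_of_pos hsp _
    have hPl : (0:ℝ) < s^lam1 := Real.rpow_pos_of_pos hsp _
    have hT1 : s ^ (lam1 - 1) * (lam1 * (F (x s) - Fstar)
        + (lam1 / 2 - α + a1) * ⟪x' s, x' s⟫ - a1 * ⟪gradient F (x s), x s - xstar⟫) ≤ 0 := by
      have hinner : lam1 * (F (x s) - Fstar) + (lam1 / 2 - α + a1) * ⟪x' s, x' s⟫
          - a1 * ⟪gradient F (x s), x s - xstar⟫ ≤ 0 := by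
        linarith [mul_le_mul_of_nonneg_left hq ha1pos.le,
          mul_le_mul_of_nonneg_right ha1gt.le hfnn,
          mul_nonneg (by linarith [ha1le] : (0:ℝ) ≤ α - lam1/2 - a1) hu2nn]
      exact mul_nonpos_iff.2 (Or.inl ⟨hP1.le, hinner⟩)
    have hT2 : (mu1 / 2) * (lam1 - 2) * s ^ (lam1 - 3) * ⟪x s - xstar, x s - xstar⟫ ≤ 0 := by
      have h2 : 0 ≤ mu1/2 * (2 - lam1) * (s ^ (lam1 - 3) * ⟪x s - xstar, x s - xstar⟫) :=
        mul_nonneg (mul_nonneg (by linarith) (by linarith)) (mul_nonneg hP3.le hv2nn)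
      linarith [h2]
    have hcs1 : (⟪x' s, g s⟫:ℝ) ≤ ‖x' s‖ * ‖g s‖ := real_inner_le_norm _ _
    have hcs2 : (⟪x s - xstar, g s⟫:ℝ) ≤ ‖x s - xstar‖ * ‖g s‖ := real_inner_le_norm _ _
    have hT3 : s ^ lam1 * ⟪x' s, g s⟫ ≤ s ^ lam1 * (‖x' s‖ * ‖g s‖) :=
      mul_le_mul_of_nonneg_left hcs1 hPl.le
    have hT4 : a1 * s ^ (lam1 - 1) * ⟪x s - xstar, g s⟫
        ≤ a1 * s ^ (lam1 - 1) * (‖x s - xstar‖ * ‖g s‖) :=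
      mul_le_mul_of_nonneg_left hcs2 (mul_nonneg ha1pos.le hP1.le)
    -- power tricks
    have e5 : s^lam1 = s^(lam1/2) * s^(lam1/2) := by
      rw [← Real.rpow_add hsp]; congr 1; ring
    have e6 : s^(lam1-2) = s^(lam1/2-1) * s^(lam1/2-1) := by
      rw [← Real.rpow_add hsp]; congr 1; ring
    have e7 : s^(lam1-1) = s^(lam1/2) * s^(lam1/2-1) := by
      rw [← Real.rpow_add hsp]; congr 1; ring
    have hApos : 0 < s^(lam1/2) := Real.rpow_pos_of_pos hsp _
    have hBpos : 0 < s^(lam1/2-1) := Real.rpow_pos_of_pos hsp _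
    have hA1 : s^(lam1/2) ≤ s^(m*α) :=
      Real.rpow_le_rpow_of_exponent_le hs1 (by linarith)
    have hb5 : s^lam1 * ‖x' s‖ ≤ s^(m*α) * ((1 + s^lam1 * ‖x' s‖^2)/2) := by
      have h1 : s^(lam1/2) * ‖x' s‖ ≤ (1 + (s^(lam1/2) * ‖x' s‖)^2)/2 := by
        linarith [sq_nonneg (s^(lam1/2) * ‖x' s‖ - 1)]
      have h2 := mul_le_mul_of_nonneg_left h1 hApos.le
      have h3 := mul_le_mul_of_nonneg_right hA1
        (show 0 ≤ (1 + (s^(lam1/2) * ‖x' s‖)^2)/2 by positivity)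
      rw [e5]; linarith [h2, h3]
    have hb6 : s^(lam1-1) * ‖x s - xstar‖
        ≤ s^(m*α) * ((1 + s^(lam1-2) * ‖x s - xstar‖^2)/2) := by
      have h1 : s^(lam1/2-1) * ‖x s - xstar‖ ≤ (1 + (s^(lam1/2-1) * ‖x s - xstar‖)^2)/2 := by
        linarith [sq_nonneg (s^(lam1/2-1) * ‖x s - xstar‖ - 1)]
      have h2 := mul_le_mul_of_nonneg_left h1 hApos.le
      have h3 := mul_le_mul_of_nonneg_right hA1
        (show 0 ≤ (1 + (s^(lam1/2-1) * ‖x s - xstar‖)^2)/2 by positivity)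
      rw [e6, e7]; linarith [h2, h3]
    have hgnn : (0:ℝ) ≤ ‖g s‖ := norm_nonneg _
    have hWnn : (0:ℝ) ≤ s^(m*α) * ‖g s‖ := mul_nonneg (Real.rpow_nonneg hsp.le _) hgnn
    have hXnn : (0:ℝ) ≤ s^lam1 * ‖x' s‖^2 := by positivity
    have hYnn : (0:ℝ) ≤ s^(lam1-2) * ‖x s - xstar‖^2 := by positivity
    have hG3' : s ^ lam1 * ⟪x' s, g s⟫
        ≤ (s^(m*α) * ‖g s‖) * ((1 + s^lam1 * ‖x' s‖^2)/2) := by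
      calc s ^ lam1 * ⟪x' s, g s⟫ ≤ s ^ lam1 * (‖x' s‖ * ‖g s‖) := hT3
        _ = (s^lam1 * ‖x' s‖) * ‖g s‖ := by ring
        _ ≤ (s^(m*α) * ((1 + s^lam1 * ‖x' s‖^2)/2)) * ‖g s‖ :=
            mul_le_mul_of_nonneg_right hb5 hgnn
        _ = (s^(m*α) * ‖g s‖) * ((1 + s^lam1 * ‖x' s‖^2)/2) := by ring
    have hG4' : a1 * s ^ (lam1 - 1) * ⟪x s - xstar, g s⟫
        ≤ a1 * ((s^(m*α) * ‖g s‖) * ((1 + s^(lam1-2) * ‖x s - xstar‖^2)/2)) := by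
      calc a1 * s ^ (lam1 - 1) * ⟪x s - xstar, g s⟫
          ≤ a1 * s ^ (lam1 - 1) * (‖x s - xstar‖ * ‖g s‖) := hT4
        _ = a1 * ((s^(lam1-1) * ‖x s - xstar‖) * ‖g s‖) := by ring
        _ ≤ a1 * ((s^(m*α) * ((1 + s^(lam1-2) * ‖x s - xstar‖^2)/2)) * ‖g s‖) :=
            mul_le_mul_of_nonneg_left (mul_le_mul_of_nonneg_right hb6 hgnn) ha1pos.le
        _ = a1 * ((s^(m*α) * ‖g s‖) * ((1 + s^(lam1-2) * ‖x s - xstar‖^2)/2)) := by ring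
    have hasm := assemble1 (a := a1) (X := s^lam1 * ‖x' s‖^2)
      (Y := s^(lam1-2) * ‖x s - xstar‖^2) (W := s^(m*α) * ‖g s‖)
      hWnn hXnn hYnn ha1pos.le
    have hstep1 : s ^ (lam1 - 1) * (lam1 * (F (x s) - Fstar)
          + (lam1 / 2 - α + a1) * ⟪x' s, x' s⟫ - a1 * ⟪gradient F (x s), x s - xstar⟫)
        + (mu1 / 2) * (lam1 - 2) * s ^ (lam1 - 3) * ⟪x s - xstar, x s - xstar⟫
        + s ^ lam1 * ⟪x' s, g s⟫ + a1 * s ^ (lam1 - 1) * ⟪x s - xstar, g s⟫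
        ≤ ((1+a1)/2) * ((s^(m*α) * ‖g s‖)
            * (1 + (s^lam1 * ‖x' s‖^2 + s^(lam1-2) * ‖x s - xstar‖^2))) := by
      linarith [hT1, hT2, hG3', hG4', hasm]
    -- step 2 : X + Y ≤ φ1 s / cQ
    have hstep2 : s^lam1 * ‖x' s‖^2 + s^(lam1-2) * ‖x s - xstar‖^2 ≤ φ1 s / cQ := by
      rw [le_div_iff₀ hcQpos]
      have h := hphi1lb s hs
      have h1 : 0 ≤ s^lam1 * (F (x s) - Fstar) :=
        mul_nonneg (Real.rpow_nonneg hsp.le _) (hf0 _)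
      linarith
    -- step 3 : 1 + φ1 s / cQ ≤ (1 + 1/cQ) * (1 + φ1 s)
    have hφnn : 0 ≤ φ1 s := hphi1nn s hs
    have hstep3 : 1 + φ1 s / cQ ≤ (1 + 1/cQ) * (1 + φ1 s) :=
      one_add_div_le hcQpos hφnn
    have hchain : (s^(m*α) * ‖g s‖)
          * (1 + (s^lam1 * ‖x' s‖^2 + s^(lam1-2) * ‖x s - xstar‖^2))
        ≤ (s^(m*α) * ‖g s‖) * ((1 + 1/cQ) * (1 + φ1 s)) := by
      apply mul_le_mul_of_nonneg_left _ hWnn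
      calc 1 + (s^lam1 * ‖x' s‖^2 + s^(lam1-2) * ‖x s - xstar‖^2)
          ≤ 1 + φ1 s / cQ := by linarith [hstep2]
        _ ≤ (1 + 1/cQ) * (1 + φ1 s) := hstep3
    have hfinal := hstep1.trans (mul_le_mul_of_nonneg_left hchain (by positivity : (0:ℝ) ≤ (1+a1)/2))
    calc _ ≤ ((1+a1)/2) * ((s^(m*α) * ‖g s‖) * ((1 + 1/cQ) * (1 + φ1 s))) := hfinal
      _ = K1 * ((s^(m*α) * ‖g s‖) * (1 + φ1 s)) := by rw [hK1]; ring
  -- Gronwall stage 1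
  have hK1pos : 0 < K1 := by
    rw [hK1]
    have h1 : 0 < 1 + a1 := by linarith
    have h2 : 0 < 1 + 1/cQ := by positivity
    positivity
  set ψ1 : ℝ → ℝ := fun s => K1 * (s^(m*α) * ‖g s‖) with hψ1def
  have hψ1int : IntegrableOn ψ1 (Set.Ici T0) := by
    have h := (hint.mono_set hsub0).const_mul K1
    exact h
  have hψ1nn : ∀ s ∈ Set.Ici T0, 0 ≤ ψ1 s := by
    intro s hs
    have hsp : 0 < s := lt_of_lt_of_le ht₀ (hsub0 hs)
    rw [hψ1def]
    positivity
  have hgron := gronwall_log hd1d hd1c hφ1c hphi1nn hψ1int hψ1nn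
    (fun s hs => by
      have h := hineq1 s hs
      rw [hψ1def]
      calc d1 s ≤ K1 * ((s^(m*α) * ‖g s‖) * (1 + φ1 s)) := h
        _ = K1 * (s^(m*α) * ‖g s‖) * (1 + φ1 s) := by ring)
  set M1 := Real.exp (Real.log (1 + φ1 T0) + ∫ s in Set.Ici T0, ψ1 s) - 1 with hM1
  have hφ1bd : ∀ s ∈ Set.Ici T0, φ1 s ≤ M1 := hgron
  have hT0mem : T0 ∈ Set.Ici T0 := Set.self_mem_Ici
  have hM1nn : 0 ≤ M1 := le_trans (hphi1nn T0 hT0mem) (hφ1bd T0 hT0mem)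
  have hfb : ∀ s ∈ Set.Ici T0, s^lam1 * (F (x s) - Fstar) ≤ M1 := by
    intro s hs
    have h1 := hphi1lb s hs
    have h2 := hφ1bd s hs
    have hsp : 0 < s := lt_of_lt_of_le ht₀ (hsub0 hs)
    have h3 : 0 ≤ cQ*(s^lam1 * ‖x' s‖^2 + s^(lam1-2) * ‖x s - xstar‖^2) := by positivity
    linarith
  have hub : ∀ s ∈ Set.Ici T0, ‖x' s‖^2 ≤ M1/cQ := by
    intro s hs
    have h1 := hphi1lb s hs
    have h2 := hφ1bd s hs
    have hsp : 0 < s := lt_of_lt_of_le ht₀ (hsub0 hs)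
    have hs1 : 1 ≤ s := le_trans (le_max_right t₀ 1) hs
    have ht1 : 1 ≤ s^lam1 := by
      calc (1:ℝ) = s^(0:ℝ) := (Real.rpow_zero s).symm
        _ ≤ s^lam1 := Real.rpow_le_rpow_of_exponent_le hs1 hl1.le
    have h3 : 0 ≤ s^lam1 * (F (x s) - Fstar) :=
      mul_nonneg (Real.rpow_nonneg hsp.le _) (hf0 _)
    have h4 : 0 ≤ s^(lam1-2) * ‖x s - xstar‖^2 := by positivity
    have h5 : cQ * ‖x' s‖^2 ≤ cQ * (s^lam1 * ‖x' s‖^2) := by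
      apply mul_le_mul_of_nonneg_left _ hcQpos.le
      exact le_mul_of_one_le_left (sq_nonneg _) ht1
    rw [le_div_iff₀ hcQpos]
    linarith [h5, mul_nonneg hcQpos.le h4]
  have hubB : ∀ s ∈ Set.Ici T0, ‖x' s‖ ≤ (1 + M1/cQ)/2 := by
    intro s hs
    have h := hub s hs
    linarith [sq_nonneg (‖x' s‖ - 1)]
  -- stage 2 : trajectory enters and stays in the ball
  set ρ := min η ε / 2 with hρdef
  have hρpos : 0 < ρ := by rw [hρdef]; positivity
  have hρε : ρ < ε := by
    rw [hρdef]
    have : min η ε ≤ ε := min_le_right _ _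
    linarith
  have hρη : ρ < η := by
    rw [hρdef]
    have : min η ε ≤ η := min_le_left _ _
    linarith
  have hout := lower_outside hconv hFs hf0 hH2g hρpos hρε hK
  set T1 := max T0 ((max (M1/(K*ρ^2)) 0 + 1)^(1/lam1)) with hT1def
  have hT1T0 : T0 ≤ T1 := le_max_left _ _
  have hsub1 : Set.Ici T1 ⊆ Set.Ici T0 := Set.Ici_subset_Ici.2 hT1T0
  have hball : ∀ s ∈ Set.Ici T1, ‖x s - xstar‖ < ρ := by
    intro s hs
    have hsT0 : s ∈ Set.Ici T0 := hsub1 hs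
    have hsp : 0 < s := lt_of_lt_of_le ht₀ (hsub0 hsT0)
    by_contra hcon
    push_neg at hcon
    have h1 := hout (x s) hcon
    have h2 := hfb s hsT0
    have hbnn : (0:ℝ) ≤ max (M1/(K*ρ^2)) 0 + 1 := by positivity
    have hbase : (max (M1/(K*ρ^2)) 0 + 1)^(1/lam1) ≤ s := le_trans (le_max_right _ _) hs
    have h3 : max (M1/(K*ρ^2)) 0 + 1 ≤ s^lam1 := by
      calc max (M1/(K*ρ^2)) 0 + 1
          = ((max (M1/(K*ρ^2)) 0 + 1)^(1/lam1))^lam1 := by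
            rw [← Real.rpow_mul hbnn, one_div, inv_mul_cancel₀ hl1.ne', Real.rpow_one]
        _ ≤ s^lam1 := Real.rpow_le_rpow (Real.rpow_nonneg hbnn _) hbase hl1.le
    have hKρ : 0 < K*ρ^2 := by positivity
    have h5 : M1 ≤ max (M1/(K*ρ^2)) 0 * (K*ρ^2) := by
      have h4 : M1/(K*ρ^2) ≤ max (M1/(K*ρ^2)) 0 := le_max_left _ _
      exact (div_le_iff₀ hKρ).1 h4
    have hPl : 0 < s^lam1 := Real.rpow_pos_of_pos hsp _
    linarith [mul_nonneg hPl.le (sub_nonneg.2 h1), mul_nonneg (sub_nonneg.2 h3) hKρ.le]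
  -- stage 3 parameters
  set lam := m*α with hlam
  have hlampos : 0 < lam := mul_pos hm hα
  have h2γm : m*(γ+2) < 2*γ := by
    rw [lt_div_iff₀ (by linarith : (0:ℝ) < γ + 2)] at hm2
    linarith [hm2]
  have hm1 : m < 1 := by
    have h : m*(γ+2) < 1*(γ+2) := by linarith
    exact lt_of_mul_lt_mul_right h (by linarith)
  have hlamα : lam < α := by
    rw [hlam]
    have := mul_lt_mul_of_pos_right hm1 hα
    linarith
  have hfeas : lam/γ < α - lam/2 := by
    rw [div_lt_iff₀ hγ0, hlam]
    linarith [mul_lt_mul_of_pos_left h2γm (half_pos hα)]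
  set a2 := (lam/γ + (α - lam/2))/2 with ha2
  have ha2gt : lam/γ < a2 := by rw [ha2]; linarith
  have ha2le : a2 ≤ α - lam/2 := by rw [ha2]; linarith
  have ha2pos : 0 < a2 := lt_of_lt_of_le (div_pos hlampos hγ0) ha2gt.le
  have hδ2 : lam < a2*γ := (div_lt_iff₀ hγ0).1 ha2gt
  set δ2 := a2*γ - lam with hδ2def
  have hδ2pos : 0 < δ2 := by rw [hδ2def]; linarith
  set mu2 := a2*(α+1-lam) with hmu2
  have hmu2nn : 0 ≤ mu2 := mul_nonneg ha2pos.le (by linarith)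
  set B1 := (1 + M1/cQ)/2 with hB1
  have hB1nn : 0 ≤ B1 := by
    rw [hB1]
    have : 0 ≤ M1/cQ := div_nonneg hM1nn hcQpos.le
    linarith
  set Cg := B1 + a2*ρ with hCg
  have hCgnn : 0 ≤ Cg := by
    rw [hCg]
    have : 0 ≤ a2*ρ := mul_nonneg ha2pos.le hρpos.le
    linarith
  set T2 := max T1 (Real.sqrt (max (mu2*(lam-2)/(2*K*δ2)) 0) + 1) with hT2def
  have hT2T1 : T1 ≤ T2 := le_max_left _ _
  have hsub2 : Set.Ici T2 ⊆ Set.Ici T1 := Set.Ici_subset_Ici.2 hT2T1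
  have hT2sq : ∀ s ∈ Set.Ici T2, mu2*(lam-2) < 2*K*δ2*s^2 := by
    intro s hs
    have h1 : Real.sqrt (max (mu2*(lam-2)/(2*K*δ2)) 0) + 1 ≤ s :=
      le_trans (le_max_right _ _) hs
    have h2 : Real.sqrt (max (mu2*(lam-2)/(2*K*δ2)) 0) < s := by
      linarith
    have h3 : max (mu2*(lam-2)/(2*K*δ2)) 0 < s^2 := by
      calc max (mu2*(lam-2)/(2*K*δ2)) 0
          = (Real.sqrt (max (mu2*(lam-2)/(2*K*δ2)) 0))^2 :=
            (Real.sq_sqrt (le_max_right _ _)).symm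
        _ < s^2 := by
            apply pow_lt_pow_left₀ h2 (Real.sqrt_nonneg _)
            norm_num
    have h4 : mu2*(lam-2)/(2*K*δ2) < s^2 := lt_of_le_of_lt (le_max_left _ _) h3
    have hpos : (0:ℝ) < 2*K*δ2 := by positivity
    rw [div_lt_iff₀ hpos] at h4
    linarith [h4]
  set φ2 := φgen lam a2 mu2 with hφ2
  set d2 := dgen lam a2 mu2 with hd2
  have hsub2₀ : Set.Ici T2 ⊆ Set.Ici t₀ := fun s hs => hsub0 (hsub1 (hsub2 hs))
  have hd2d : ∀ s ∈ Set.Ici T2, HasDerivAt φ2 (d2 s) s :=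
    fun s hs => hderiv lam a2 mu2 s (hsub2₀ hs)
  have hd2c : ContinuousOn d2 (Set.Ici T2) := (hdcont _ _ _).mono hsub2₀
  -- pointwise differential inequality stage 3
  have hineq2 : ∀ s ∈ Set.Ici T2, d2 s ≤ Cg * (s^lam * ‖g s‖) := by
    intro s hs
    have hsT1 : s ∈ Set.Ici T1 := hsub2 hs
    have hsT0 : s ∈ Set.Ici T0 := hsub1 hsT1
    have hst₀ : s ∈ Set.Ici t₀ := hsub0 hsT0
    have hsp : 0 < s := lt_of_lt_of_le ht₀ hst₀
    have hs1 : 1 ≤ s := le_trans (le_max_right t₀ 1) hsT0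
    have hvρ : ‖x s - xstar‖ < ρ := hball s hsT1
    have hqγ : γ * (F (x s) - Fstar) ≤ ⟪gradient F (x s), x s - xstar⟫ :=
      hH1g (x s) (lt_trans hvρ hρη)
    have hKv : K * ‖x s - xstar‖^2 ≤ F (x s) - Fstar :=
      hH2g (x s) (lt_trans hvρ hρε)
    have hx''s : x'' s = g s - (α/s) • x' s - gradient F (x s) := by
      rw [← hode s hst₀]; abel
    have hgrp := lyap_group (x' s) (x'' s) (gradient F (x s)) (g s) (x s - xstar) s lam a2 α
        (F (x s) - Fstar) mu2 hsp hmu2 hx''s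
    have hd2s : d2 s = s ^ (lam - 1) * (lam * (F (x s) - Fstar)
          + (lam / 2 - α + a2) * ⟪x' s, x' s⟫ - a2 * ⟪gradient F (x s), x s - xstar⟫)
        + (mu2 / 2) * (lam - 2) * s ^ (lam - 3) * ⟪x s - xstar, x s - xstar⟫
        + s ^ lam * ⟪x' s, g s⟫ + a2 * s ^ (lam - 1) * ⟪x s - xstar, g s⟫ := by
      simp only [hd2, hdgen]
      exact hgrp
    rw [hd2s]
    have hfnn : 0 ≤ F (x s) - Fstar := hf0 _
    have hu2nn : (0:ℝ) ≤ ⟪x' s, x' s⟫ := real_inner_self_nonneg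
    have hv2 : (⟪x s - xstar, x s - xstar⟫:ℝ) = ‖x s - xstar‖^2 :=
      real_inner_self_eq_norm_sq _
    have hP1 : (0:ℝ) < s^(lam-1) := Real.rpow_pos_of_pos hsp _
    have hP3 : (0:ℝ) < s^(lam-3) := Real.rpow_pos_of_pos hsp _
    have hPl : (0:ℝ) < s^lam := Real.rpow_pos_of_pos hsp _
    -- term 1
    have hG1 : s ^ (lam - 1) * (lam * (F (x s) - Fstar)
        + (lam / 2 - α + a2) * ⟪x' s, x' s⟫ - a2 * ⟪gradient F (x s), x s - xstar⟫)
        ≤ -(δ2 * (s^(lam-1) * (F (x s) - Fstar))) := by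
      have hinner : lam * (F (x s) - Fstar) + (lam / 2 - α + a2) * ⟪x' s, x' s⟫
          - a2 * ⟪gradient F (x s), x s - xstar⟫ ≤ -(δ2 * (F (x s) - Fstar)) := by
        have h1 := mul_le_mul_of_nonneg_left hqγ ha2pos.le
        rw [hδ2def]
        linarith [h1, mul_nonneg (by linarith [ha2le] : (0:ℝ) ≤ α - lam/2 - a2) hu2nn]
      calc s ^ (lam - 1) * (lam * (F (x s) - Fstar)
            + (lam / 2 - α + a2) * ⟪x' s, x' s⟫ - a2 * ⟪gradient F (x s), x s - xstar⟫)
          ≤ s ^ (lam - 1) * (-(δ2 * (F (x s) - Fstar))) :=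
            mul_le_mul_of_nonneg_left hinner hP1.le
        _ = -(δ2 * (s^(lam-1) * (F (x s) - Fstar))) := by ring
    -- term 2
    have hrel13 : s^(lam-1) = s^(lam-3)*(s*s) := by
      rw [show lam - 1 = lam - 3 + 1 + 1 by ring, Real.rpow_add_one hsp.ne',
        Real.rpow_add_one hsp.ne']
      ring
    have hG2 : (mu2 / 2) * (lam - 2) * s ^ (lam - 3) * ⟪x s - xstar, x s - xstar⟫
        ≤ δ2 * (s^(lam-1) * (F (x s) - Fstar)) := by
      have hccnn : (0:ℝ) ≤ ⟪x s - xstar, x s - xstar⟫ := real_inner_self_nonneg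
      rcases le_or_gt lam 2 with hcase | hcase
      · have hlhs : (mu2 / 2) * (lam - 2) * s ^ (lam - 3) * ⟪x s - xstar, x s - xstar⟫ ≤ 0 := by
          have h2 : 0 ≤ mu2/2 * (2 - lam) * (s ^ (lam - 3) * ⟪x s - xstar, x s - xstar⟫) :=
            mul_nonneg (mul_nonneg (by linarith) (by linarith)) (mul_nonneg hP3.le hccnn)
          linarith [h2]
        have hrhs : 0 ≤ δ2 * (s^(lam-1) * (F (x s) - Fstar)) :=
          mul_nonneg hδ2pos.le (mul_nonneg hP1.le hfnn)
        exact le_trans hlhs hrhs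
      · have hKcc : K * ⟪x s - xstar, x s - xstar⟫ ≤ F (x s) - Fstar := by
          rw [hv2]; exact hKv
        have hlt := hT2sq s hs
        rw [hrel13]
        exact neg_quad_bound hP3 hccnn hKcc hlt hδ2pos hK
    -- terms 3, 4
    have hgnn : (0:ℝ) ≤ ‖g s‖ := norm_nonneg _
    have hcs1 : (⟪x' s, g s⟫:ℝ) ≤ ‖x' s‖ * ‖g s‖ := real_inner_le_norm _ _
    have hcs2 : (⟪x s - xstar, g s⟫:ℝ) ≤ ‖x s - xstar‖ * ‖g s‖ := real_inner_le_norm _ _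
    have huB := hubB s hsT0
    have hG3 : s ^ lam * ⟪x' s, g s⟫ ≤ s^lam * (B1 * ‖g s‖) := by
      apply mul_le_mul_of_nonneg_left _ hPl.le
      calc (⟪x' s, g s⟫:ℝ) ≤ ‖x' s‖ * ‖g s‖ := hcs1
        _ ≤ B1 * ‖g s‖ := by
            apply mul_le_mul_of_nonneg_right _ hgnn
            rw [hB1]; exact huB
    have hple : s^(lam-1) ≤ s^lam := Real.rpow_le_rpow_of_exponent_le hs1 (by linarith)
    have hG4 : a2 * s ^ (lam - 1) * ⟪x s - xstar, g s⟫ ≤ a2 * (s^lam * (ρ * ‖g s‖)) := by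
      have h1 : (⟪x s - xstar, g s⟫:ℝ) ≤ ρ * ‖g s‖ := by
        calc (⟪x s - xstar, g s⟫:ℝ) ≤ ‖x s - xstar‖ * ‖g s‖ := hcs2
          _ ≤ ρ * ‖g s‖ := mul_le_mul_of_nonneg_right hvρ.le hgnn
      calc a2 * s ^ (lam - 1) * ⟪x s - xstar, g s⟫
          ≤ a2 * s ^ (lam - 1) * (ρ * ‖g s‖) :=
            mul_le_mul_of_nonneg_left h1 (mul_nonneg ha2pos.le hP1.le)
        _ = a2 * (s^(lam-1) * (ρ * ‖g s‖)) := by ring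
        _ ≤ a2 * (s^lam * (ρ * ‖g s‖)) :=
            mul_le_mul_of_nonneg_left
              (mul_le_mul_of_nonneg_right hple (mul_nonneg hρpos.le hgnn)) ha2pos.le
    calc s ^ (lam - 1) * (lam * (F (x s) - Fstar)
          + (lam / 2 - α + a2) * ⟪x' s, x' s⟫ - a2 * ⟪gradient F (x s), x s - xstar⟫)
        + (mu2 / 2) * (lam - 2) * s ^ (lam - 3) * ⟪x s - xstar, x s - xstar⟫
        + s ^ lam * ⟪x' s, g s⟫ + a2 * s ^ (lam - 1) * ⟪x s - xstar, g s⟫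
        ≤ -(δ2 * (s^(lam-1) * (F (x s) - Fstar))) + δ2 * (s^(lam-1) * (F (x s) - Fstar))
          + s^lam * (B1 * ‖g s‖) + a2 * (s^lam * (ρ * ‖g s‖)) := by
          linarith [hG1, hG2, hG3, hG4]
      _ = Cg * (s^lam * ‖g s‖) := by rw [hCg]; ring
  -- integrate stage 3
  set ψ2 : ℝ → ℝ := fun s => Cg * (s^lam * ‖g s‖) with hψ2def
  have hψ2int : IntegrableOn ψ2 (Set.Ici T2) := by
    have h := (hint.mono_set hsub2₀).const_mul Cg
    exact h
  have hψ2nn : ∀ s ∈ Set.Ici T2, 0 ≤ ψ2 s := by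
    intro s hs
    have hsp : 0 < s := lt_of_lt_of_le ht₀ (hsub2₀ hs)
    rw [hψ2def]
    positivity
  have hφ2bd := int_bound hd2d hd2c hψ2int hineq2 hψ2nn
  set M2 := φ2 T2 + ∫ s in Set.Ici T2, ψ2 s with hM2
  -- final coercivity
  set T3 := max T2 (Real.sqrt (a2^2/K) + 1) with hT3def
  have hT3T2 : T2 ≤ T3 := le_max_left _ _
  have hsub3 : Set.Ici T3 ⊆ Set.Ici T2 := Set.Ici_subset_Ici.2 hT3T2
  have hcoer2 : ∀ s ∈ Set.Ici T3, s^lam * (F (x s) - Fstar) ≤ 2 * φ2 s := by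
    intro s hs
    have hsT2 : s ∈ Set.Ici T2 := hsub3 hs
    have hsT1 : s ∈ Set.Ici T1 := hsub2 hsT2
    have hst₀ : s ∈ Set.Ici t₀ := hsub2₀ hsT2
    have hsp : 0 < s := lt_of_lt_of_le ht₀ hst₀
    have hvρ : ‖x s - xstar‖ < ρ := hball s hsT1
    have hKv : K * ‖x s - xstar‖^2 ≤ F (x s) - Fstar := hH2g (x s) (lt_trans hvρ hρε)
    have e5 : s^lam = s^(lam/2) * s^(lam/2) := by
      rw [← Real.rpow_add hsp]; congr 1; ring
    have e6 : s^(lam-2) = s^(lam/2-1) * s^(lam/2-1) := by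
      rw [← Real.rpow_add hsp]; congr 1; ring
    have e7 : s^(lam-1) = s^(lam/2) * s^(lam/2-1) := by
      rw [← Real.rpow_add hsp]; congr 1; ring
    have hApos : 0 < s^(lam/2) := Real.rpow_pos_of_pos hsp _
    have hBpos : 0 < s^(lam/2-1) := Real.rpow_pos_of_pos hsp _
    have hrel : s^(lam/2) * s^(lam/2) = (s^(lam/2-1) * s^(lam/2-1))*(s*s) := by
      rw [← e5, ← e6]
      rw [show lam = lam - 2 + 1 + 1 by ring, Real.rpow_add_one hsp.ne',
        Real.rpow_add_one hsp.ne']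
      ring
    have ha2K : a2^2 ≤ K*(s*s) := by
      have h1 : Real.sqrt (a2^2/K) + 1 ≤ s := le_trans (le_max_right _ _) hs
      have h2 : Real.sqrt (a2^2/K) < s := by linarith
      have h3 : a2^2/K < s^2 := by
        calc a2^2/K = (Real.sqrt (a2^2/K))^2 := (Real.sq_sqrt (by positivity)).symm
          _ < s^2 := by
              apply pow_lt_pow_left₀ h2 (Real.sqrt_nonneg _)
              norm_num
      rw [div_lt_iff₀ hK] at h3
      linarith [h3]
    have hKcc : K * ⟪x s - xstar, x s - xstar⟫ ≤ F (x s) - Fstar := by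
      rw [real_inner_self_eq_norm_sq]; exact hKv
    have hbb : -(‖x s - xstar‖ * ‖x' s‖) ≤ ⟪x s - xstar, x' s⟫ :=
      (abs_le.1 (abs_real_inner_le_norm _ _)).1
    have hu2 : (⟪x' s, x' s⟫:ℝ) = ‖x' s‖^2 := real_inner_self_eq_norm_sq _
    have hv2 : (⟪x s - xstar, x s - xstar⟫:ℝ) = ‖x s - xstar‖^2 :=
      real_inner_self_eq_norm_sq _
    have hfnn : 0 ≤ F (x s) - Fstar := hf0 _
    simp only [hφ2, hφgen]
    rw [hu2, e5, e6, e7]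
    exact coer_bound (n := n) (s^(lam/2)) (s^(lam/2-1)) ‖x' s‖ ‖x s - xstar‖
      (F (x s) - Fstar) ⟪x s - xstar, x' s⟫ K a2 mu2 s ⟪x s - xstar, x s - xstar⟫
      hApos hBpos hrel hKcc hv2 ha2K hbb ha2pos.le hmu2nn
  -- conclusion
  set C := max (2*M2) 1 with hC
  have hCpos : (0:ℝ) < C := lt_of_lt_of_le one_pos (le_max_right _ _)
  have hT3t₀ : t₀ ≤ T3 := le_trans hT0t₀ (le_trans hT1T0 (le_trans hT2T1 hT3T2))
  refine ⟨C, hCpos, T3, hT3t₀, ?_⟩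
  intro t ht
  have htT3 : t ∈ Set.Ici T3 := ht
  have htT2 : t ∈ Set.Ici T2 := hsub3 htT3
  have htp : 0 < t := lt_of_lt_of_le ht₀ (hsub2₀ htT2)
  have h1 := hcoer2 t htT3
  have h2 := hφ2bd t htT2
  have h3 : t^lam * (F (x t) - Fstar) ≤ C := by
    calc t^lam * (F (x t) - Fstar) ≤ 2 * φ2 t := h1
      _ ≤ 2 * M2 := by rw [hM2]; linarith
      _ ≤ C := le_max_left _ _
  have hplam : 0 < t^lam := Real.rpow_pos_of_pos htp _
  rw [Real.rpow_neg htp.le, ← div_eq_mul_inv, le_div_iff₀ hplam]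
  linarith [h3]
end

section
/- Let F : ℝⁿ → ℝ be a convex differentiable function whose set of minimizers X* = argmin F is nonempty, with minimum value F*. If F satisfies hypothesis H1(γ) for some γ ≥ 1, then for every minimizer x* ∈ X* there exist M > 0 and η > 0 such that F(x) − F* ≤ M · ‖x − x*‖^γ for all x with ‖x − x*‖ < η. -/
open MeasureTheory
open scoped RealInnerProductSpace

theorem stmt_12
    {n : ℕ} (hn : 1 ≤ n)
    (F : EuclideanSpace ℝ (Fin n) → ℝ) (Fstar : ℝ)
    (Xstar : Set (EuclideanSpace ℝ (Fin n)))
    (hXstar : Xstar = {z | ∀ y, F z ≤ F y})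
    (hne : Xstar.Nonempty)
    (hFstar : ∀ z ∈ Xstar, F z = Fstar)
    (hconv : ConvexOn ℝ Set.univ F)
    (hdiff : Differentiable ℝ F)
    (γ : ℝ) (hγ : 1 ≤ γ)
    (hH1 : ∀ z ∈ Xstar, ∃ η > 0, ∀ y : EuclideanSpace ℝ (Fin n),
      ‖y - z‖ < η → F y - Fstar ≤ (1 / γ) * ⟪gradient F y, y - z⟫)
    :
    ∀ z ∈ Xstar, ∃ M > 0, ∃ η > 0, ∀ y : EuclideanSpace ℝ (Fin n),
      ‖y - z‖ < η → F y - Fstar ≤ M * ‖y - z‖ ^ γ := by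
  intro z hz
  obtain ⟨η, hη, hH⟩ := hH1 z hz
  have hγ0 : (0:ℝ) < γ := lt_of_lt_of_le one_pos hγ
  have hzmin : ∀ y, F z ≤ F y := by rw [hXstar] at hz; exact hz
  have hFz : F z = Fstar := hFstar z hz
  obtain ⟨w, hw, hwmax⟩ := (isCompact_closedBall z η).exists_isMaxOn
    (Metric.nonempty_closedBall.2 hη.le) hdiff.continuous.continuousOn
  set b : ℝ := η / 2 with hbdef
  have hb0 : 0 < b := by positivity
  have hbη : b < η := by simp only [hbdef]; linarith
  set C : ℝ := F w with hCdef
  have hCF : 0 ≤ C - Fstar := by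
    have := hzmin w; linarith [hFz]
  have hbp : (0:ℝ) < b ^ (-γ) := Real.rpow_pos_of_pos hb0 _
  refine ⟨(C - Fstar) * b ^ (-γ) + 1, by nlinarith, b, hb0, ?_⟩
  intro x hx
  rcases eq_or_ne x z with rfl | hxz
  · simp [hFz, Real.zero_rpow (ne_of_gt hγ0)]
  · set s0 : ℝ := ‖x - z‖ with hs0def
    have hs0 : 0 < s0 := by
      simpa [hs0def] using norm_pos_iff.2 (sub_ne_zero.2 hxz)
    set u : EuclideanSpace ℝ (Fin n) := s0⁻¹ • (x - z) with hudef
    have hu : ‖u‖ = 1 := by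
      rw [hudef, norm_smul, ← hs0def, Real.norm_eq_abs, abs_of_pos (inv_pos.2 hs0),
        inv_mul_cancel₀ (ne_of_gt hs0)]
    set ψ : ℝ → ℝ := fun s => F (z + s • u) - Fstar with hψdef
    have hψ : ∀ s : ℝ, HasDerivAt ψ ⟪gradient F (z + s • u), u⟫ s := by
      intro s
      have hline : HasDerivAt (fun s : ℝ => z + s • u) u s := by
        simpa using ((hasDerivAt_id s).smul_const u).const_add z
      have hgrad := (hdiff (z + s • u)).hasGradientAt
      have hcomp := hgrad.hasFDerivAt.comp_hasDerivAt s hline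
      simpa [hψdef, InnerProductSpace.toDual_apply_apply] using hcomp.sub_const Fstar
    set h : ℝ → ℝ := fun s => ψ s * s ^ (-γ) with hhdef
    have hderiv : ∀ s ∈ Set.Ioo (0:ℝ) η, HasDerivAt h
        (⟪gradient F (z + s • u), u⟫ * s ^ (-γ) + ψ s * (-γ * s ^ (-γ - 1))) s := by
      intro s hs
      exact (hψ s).mul (Real.hasDerivAt_rpow_const (Or.inl (ne_of_gt hs.1)))
    have hmono : MonotoneOn h (Set.Ioo 0 η) := by
      apply monotoneOn_of_deriv_nonneg (convex_Ioo 0 η)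
      · exact fun s hs => ((hderiv s hs).continuousAt).continuousWithinAt
      · rw [interior_Ioo]
        exact fun s hs => (hderiv s hs).differentiableAt.differentiableWithinAt
      · rw [interior_Ioo]
        intro s hs
        rw [(hderiv s hs).deriv]
        set D : ℝ := ⟪gradient F (z + s • u), u⟫ with hDdef
        have hyz : (z + s • u) - z = s • u := by abel
        have hynorm : ‖(z + s • u) - z‖ < η := by
          rw [hyz, norm_smul, hu]
          simpa [abs_of_pos hs.1] using hs.2
        have hkey : γ * ψ s ≤ s * D := by
          have h1 := hH (z + s • u) hynorm
          rw [hyz, real_inner_smul_right] at h1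
          have : ψ s ≤ (1 / γ) * (s * D) := h1
          calc γ * ψ s ≤ γ * ((1 / γ) * (s * D)) :=
                mul_le_mul_of_nonneg_left this (le_of_lt hγ0)
            _ = s * D := by field_simp
        have hp : (0:ℝ) < s ^ (-γ - 1) := Real.rpow_pos_of_pos hs.1 _
        have hsγ : s ^ (-γ) = s * s ^ (-γ - 1) := by
          rw [show (-γ) = 1 + (-γ - 1) by ring, Real.rpow_add hs.1, Real.rpow_one]; norm_num
        rw [hsγ]
        nlinarith
    have hs0b : s0 < b := hx
    have hs0mem : s0 ∈ Set.Ioo (0:ℝ) η := ⟨hs0, lt_trans hs0b hbη⟩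
    have hbmem : b ∈ Set.Ioo (0:ℝ) η := ⟨hb0, hbη⟩
    have hhle : h s0 ≤ h b := hmono hs0mem hbmem (le_of_lt hs0b)
    have hxeq : z + s0 • u = x := by
      rw [hudef, smul_inv_smul₀ (ne_of_gt hs0)]
      abel
    have hψs0 : ψ s0 = F x - Fstar := by rw [hψdef]; simp [hxeq]
    have hψb : ψ b ≤ C - Fstar := by
      have hmem : z + b • u ∈ Metric.closedBall z η := by
        rw [Metric.mem_closedBall, dist_eq_norm]
        have : (z + b • u) - z = b • u := by abel
        rw [this, norm_smul, hu, mul_one, Real.norm_eq_abs, abs_of_pos hb0]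
        exact le_of_lt hbη
      have h3 : F (z + b • u) ≤ C := hwmax hmem
      simp only [hψdef]
      linarith
    -- combine
    have hchain : (F x - Fstar) * s0 ^ (-γ) ≤ (C - Fstar) * b ^ (-γ) := by
      calc (F x - Fstar) * s0 ^ (-γ) = h s0 := by rw [hhdef]; simp [hψs0]
        _ ≤ h b := hhle
        _ = ψ b * b ^ (-γ) := rfl
        _ ≤ (C - Fstar) * b ^ (-γ) := mul_le_mul_of_nonneg_right hψb (le_of_lt hbp)
    have hs0γ : (0:ℝ) < s0 ^ γ := Real.rpow_pos_of_pos hs0 _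
    have hinv : s0 ^ (-γ) * s0 ^ γ = 1 := by
      rw [← Real.rpow_add hs0]; simp
    have h2 := mul_le_mul_of_nonneg_right hchain (le_of_lt hs0γ)
    rw [mul_assoc, hinv, mul_one] at h2
    calc F x - Fstar ≤ (C - Fstar) * b ^ (-γ) * s0 ^ γ := h2
      _ ≤ ((C - Fstar) * b ^ (-γ) + 1) * s0 ^ γ := by nlinarith
end

section
/- Let F : ℝⁿ → ℝ be a convex differentiable function whose set of minimizers X* = argmin F is nonempty and satisfies X* ≠ ℝⁿ. If F satisfies both hypothesis H1(γ) and hypothesis H2(r) for some γ ≥ 1 and r ≥ 1, then necessarily r ≥ γ. -/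
open MeasureTheory
open scoped RealInnerProductSpace

set_option maxHeartbeats 1000000

theorem stmt_13
    {n : ℕ} (hn : 1 ≤ n)
    (F : EuclideanSpace ℝ (Fin n) → ℝ) (Fstar : ℝ)
    (Xstar : Set (EuclideanSpace ℝ (Fin n)))
    (hXstar : Xstar = {z | ∀ y, F z ≤ F y})
    (hne : Xstar.Nonempty)
    (hFstar : ∀ z ∈ Xstar, F z = Fstar)
    (hconv : ConvexOn ℝ Set.univ F)
    (hdiff : Differentiable ℝ F)
    (hproper : Xstar ≠ Set.univ)
    (γ r : ℝ) (hγ : 1 ≤ γ) (hr : 1 ≤ r)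
    (hH1 : ∀ z ∈ Xstar, ∃ η > 0, ∀ y : EuclideanSpace ℝ (Fin n),
      ‖y - z‖ < η → F y - Fstar ≤ (1 / γ) * ⟪gradient F y, y - z⟫)
    (hH2 : ∀ z ∈ Xstar, ∃ K > 0, ∃ ε > 0, ∀ y : EuclideanSpace ℝ (Fin n),
      ‖y - z‖ < ε → K * Metric.infDist y Xstar ^ (r : ℝ) ≤ F y - Fstar)
    :
    γ ≤ r := by
  classical
  -- basic facts
  obtain ⟨x₀, hx₀⟩ := hne
  have hmin : ∀ y, Fstar ≤ F y := by
    intro y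
    rw [← hFstar x₀ hx₀]
    exact (hXstar ▸ hx₀) y
  have hmem_iff : ∀ z, z ∈ Xstar ↔ F z = Fstar := by
    intro z
    constructor
    · exact hFstar z
    · intro hz
      rw [hXstar]
      intro y
      rw [hz]; exact hmin y
  -- Xstar is closed
  have hclosed : IsClosed Xstar := by
    have : Xstar = ⋂ y, {z | F z ≤ F y} := by
      rw [hXstar]; ext z; simp [Set.mem_iInter]
    rw [this]
    exact isClosed_iInter fun y => isClosed_le hdiff.continuous continuous_const
  -- Xstar is convex
  have hconvX : Convex ℝ Xstar := by
    intro z1 hz1 z2 hz2 a b ha hb hab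
    rw [hmem_iff] at hz1 hz2 ⊢
    have h1 := hconv.2 (Set.mem_univ z1) (Set.mem_univ z2) ha hb hab
    have h2 := hmin (a • z1 + b • z2)
    rw [hz1, hz2, smul_eq_mul, smul_eq_mul] at h1
    have h3 : a * Fstar + b * Fstar = Fstar := by rw [← add_mul, hab, one_mul]
    linarith
  -- pick a point outside Xstar and its projection
  have : ∃ y₀, y₀ ∉ Xstar := by
    by_contra h
    push_neg at h
    exact hproper (Set.eq_univ_of_forall h)
  obtain ⟨y₀, hy₀⟩ := this
  obtain ⟨xs, hxs, hxseq⟩ := hclosed.exists_infDist_eq_dist ⟨x₀, hx₀⟩ y₀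
  -- projection property
  have hproj : ∀ z ∈ Xstar, ⟪y₀ - xs, z - xs⟫ ≤ 0 := by
    have heq : ‖y₀ - xs‖ = ⨅ w : Xstar, ‖y₀ - w‖ := by
      have h4 : (⨅ w : Xstar, ‖y₀ - (w : EuclideanSpace ℝ (Fin n))‖) = Metric.infDist y₀ Xstar := by
        rw [Metric.infDist_eq_iInf]
        exact iInf_congr fun w => (dist_eq_norm _ _).symm
      rw [h4, hxseq, dist_eq_norm]
    exact (norm_eq_iInf_iff_real_inner_le_zero hconvX hxs).1 heq
  have hd : 0 < ‖y₀ - xs‖ := by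
    rw [norm_pos_iff, sub_ne_zero]
    intro h; exact hy₀ (h ▸ hxs)
  set u : EuclideanSpace ℝ (Fin n) := ‖y₀ - xs‖⁻¹ • (y₀ - xs) with hu
  have hnu : ‖u‖ = 1 := by
    rw [hu, norm_smul, norm_inv, norm_norm, inv_mul_cancel₀ hd.ne']
  -- distance lower bound along the ray
  set p : ℝ → EuclideanSpace ℝ (Fin n) := fun t => xs + t • u with hp
  have hdistlb : ∀ t : ℝ, 0 ≤ t → ∀ z ∈ Xstar, t ≤ ‖p t - z‖ := by
    intro t ht z hz
    have hinner : 0 ≤ ⟪u, xs - z⟫ := by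
      have h1 := hproj z hz
      have : ⟪u, xs - z⟫ = ‖y₀ - xs‖⁻¹ * (-⟪y₀ - xs, z - xs⟫) := by
        rw [hu, real_inner_smul_left]
        congr 1
        rw [← inner_neg_right, neg_sub]
      rw [this]
      exact mul_nonneg (inv_nonneg.2 (norm_nonneg _)) (by linarith)
    have hsplit : p t - z = t • u + (xs - z) := by
      rw [hp]; show xs + t • u - z = t • u + (xs - z); abel
    have hsq : t ^ 2 ≤ ‖p t - z‖ ^ 2 := by
      rw [hsplit, norm_add_sq_real, norm_smul, real_inner_smul_left]
      simp only [hnu, Real.norm_eq_abs, abs_of_nonneg ht, mul_one]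
      nlinarith [sq_nonneg (‖xs - z‖), mul_nonneg ht hinner]
    nlinarith [norm_nonneg (p t - z)]
  have hinfdlb : ∀ t : ℝ, 0 ≤ t → t ≤ Metric.infDist (p t) Xstar := by
    intro t ht
    refine le_of_not_gt fun h => ?_
    rw [Metric.infDist_lt_iff ⟨x₀, hx₀⟩] at h
    obtain ⟨z, hz, hdz⟩ := h
    rw [dist_eq_norm] at hdz
    exact absurd (hdistlb t ht z hz) (not_le.2 hdz)
  -- p t is not a minimizer for t > 0, hence F (p t) > Fstar
  have hgpos : ∀ t : ℝ, 0 < t → 0 < F (p t) - Fstar := by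
    intro t ht
    rcases lt_or_eq_of_le (hmin (p t)) with h | h
    · linarith
    · exfalso
      have hmem : p t ∈ Xstar := (hmem_iff (p t)).2 h.symm
      have := hdistlb t ht.le (p t) hmem
      simp at this
      linarith
  -- derivative of F along the ray
  have hline : ∀ t : ℝ, HasDerivAt (fun s : ℝ => F (xs + s • u) - Fstar)
      ((fderiv ℝ F (p t)) u) t := by
    intro t
    have h1 : HasDerivAt (fun s : ℝ => xs + s • u) u t := by
      simpa using ((hasDerivAt_id t).smul_const u).const_add xs
    exact ((hdiff (p t)).hasFDerivAt.comp_hasDerivAt t h1).sub_const Fstar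
  -- gradient to fderiv
  have hgradeq : ∀ y v : EuclideanSpace ℝ (Fin n), ⟪gradient F y, v⟫ = (fderiv ℝ F y) v := by
    intro y v
    rw [gradient]
    simp [InnerProductSpace.toDual_symm_apply]
  -- instantiate H1, H2 at xs
  obtain ⟨η, hη, hH1'⟩ := hH1 xs hxs
  obtain ⟨K, hK, ε, hε, hH2'⟩ := hH2 xs hxs
  set T : ℝ := min η ε / 2 with hTdef
  have hminηε : 0 < min η ε := lt_min hη hε
  have hT0 : 0 < T := by rw [hTdef]; linarith
  have hTη : T < η := by
    have := min_le_left η ε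
    rw [hTdef]; linarith
  have hTε : T < ε := by
    have := min_le_right η ε
    rw [hTdef]; linarith
  have hγ0 : 0 < γ := by linarith
  -- key differential inequality from H1
  have hkey : ∀ s : ℝ, 0 < s → s < η →
      γ * (F (p s) - Fstar) ≤ s * (fderiv ℝ F (p s)) u := by
    intro s hs hsη
    have hps : p s - xs = s • u := add_sub_cancel_left xs _
    have hnorm : ‖p s - xs‖ < η := by
      rw [hps, norm_smul, hnu, mul_one, Real.norm_eq_abs, abs_of_pos hs]
      exact hsη
    have h := hH1' (p s) hnorm
    rw [hps, real_inner_smul_right, hgradeq] at h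
    have h2 := mul_le_mul_of_nonneg_left h hγ0.le
    have h3 : γ * (1 / γ * (s * (fderiv ℝ F (p s)) u)) = s * (fderiv ℝ F (p s)) u := by
      field_simp
    linarith
  -- upper bound F (p t) - Fstar ≤ C * t ^ γ for 0 < t ≤ T
  set C : ℝ := (F (p T) - Fstar) * T ^ (-γ) with hCdef
  have hC0 : 0 < C := mul_pos (hgpos T hT0) (Real.rpow_pos_of_pos hT0 _)
  set ψ : ℝ → ℝ := fun s => (F (xs + s • u) - Fstar) * s ^ (-γ) with hψ
  have hds : ∀ s : ℝ, 0 < s → HasDerivAt ψ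
      ((fderiv ℝ F (p s)) u * s ^ (-γ) +
        (F (xs + s • u) - Fstar) * (-γ * s ^ (-γ - 1))) s := by
    intro s hs
    exact (hline s).mul (Real.hasDerivAt_rpow_const (Or.inl hs.ne'))
  have hub : ∀ t : ℝ, 0 < t → t ≤ T → F (p t) - Fstar ≤ C * t ^ γ := by
    intro t ht htT
    have hψle : ψ t ≤ ψ T := by
      have hmono : MonotoneOn ψ (Set.Icc t T) := by
        apply monotoneOn_of_deriv_nonneg (convex_Icc t T)
        · apply ContinuousOn.mul
          · apply Continuous.continuousOn
            have : Continuous fun s : ℝ => xs + s • u := by continuity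
            exact (hdiff.continuous.comp this).sub continuous_const
          · intro s hs
            exact (Real.continuousAt_rpow_const s (-γ)
              (Or.inl (ne_of_gt (lt_of_lt_of_le ht hs.1)))).continuousWithinAt
        · intro s hs
          rw [interior_Icc] at hs
          exact ((hds s (ht.trans hs.1)).differentiableAt).differentiableWithinAt
        · intro s hs
          rw [interior_Icc] at hs
          have hs0 : 0 < s := ht.trans hs.1
          have hsη : s < η := lt_trans hs.2 hTη
          rw [(hds s hs0).deriv]
          have hkey' := hkey s hs0 hsη
          have e1 : s ^ (-γ) = s ^ (-γ - 1) * s := by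
            rw [← Real.rpow_add_one hs0.ne' (-γ - 1)]
            congr 1; ring
          have e2 : (0:ℝ) < s ^ (-γ - 1) := Real.rpow_pos_of_pos hs0 _
          have e3 : 0 ≤ s ^ (-γ - 1) * (s * (fderiv ℝ F (p s)) u - γ * (F (p s) - Fstar)) :=
            mul_nonneg e2.le (sub_nonneg.2 hkey')
          rw [e1]
          have hpse : p s = xs + s • u := rfl
          rw [← hpse]
          nlinarith [e3]
      exact hmono ⟨le_refl t, htT⟩ ⟨htT, le_refl T⟩ htT
    have hψt : ψ t = (F (p t) - Fstar) * t ^ (-γ) := rfl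
    have hψT : ψ T = C := rfl
    rw [hψt, hψT] at hψle
    have htγ : (0:ℝ) < t ^ γ := Real.rpow_pos_of_pos ht _
    have h5 := mul_le_mul_of_nonneg_right hψle htγ.le
    have h6 : t ^ (-γ) * t ^ γ = 1 := by
      rw [← Real.rpow_add ht]; simp
    calc F (p t) - Fstar = (F (p t) - Fstar) * (t ^ (-γ) * t ^ γ) := by rw [h6, mul_one]
      _ = (F (p t) - Fstar) * t ^ (-γ) * t ^ γ := by ring
      _ ≤ C * t ^ γ := h5
  -- lower bound from H2
  have hlb : ∀ t : ℝ, 0 < t → t ≤ T → K * t ^ r ≤ F (p t) - Fstar := by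
    intro t ht htT
    have hps : p t - xs = t • u := add_sub_cancel_left xs _
    have hnorm : ‖p t - xs‖ < ε := by
      rw [hps, norm_smul, hnu, mul_one, Real.norm_eq_abs, abs_of_pos ht]
      linarith
    have h2 := hH2' (p t) hnorm
    have h3 : t ^ r ≤ Metric.infDist (p t) Xstar ^ r :=
      Real.rpow_le_rpow ht.le (hinfdlb t ht.le) (by linarith)
    calc K * t ^ r ≤ K * Metric.infDist (p t) Xstar ^ r :=
          mul_le_mul_of_nonneg_left h3 hK.le
      _ ≤ F (p t) - Fstar := h2
  -- conclude
  by_contra hcon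
  push_neg at hcon
  have hδ : 0 < γ - r := by linarith
  set a : ℝ := (K / C) ^ (γ - r)⁻¹ with ha
  have ha0 : 0 < a := Real.rpow_pos_of_pos (div_pos hK hC0) _
  set t : ℝ := min T a / 2 with htdef
  have hminTa : 0 < min T a := lt_min hT0 ha0
  have ht0 : 0 < t := by rw [htdef]; linarith
  have htT : t ≤ T := by
    have := min_le_left T a
    rw [htdef]; linarith
  have hta : t < a := by
    have := min_le_right T a
    rw [htdef]; linarith
  have h1 : K * t ^ r ≤ C * t ^ γ := le_trans (hlb t ht0 htT) (hub t ht0 htT)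
  have e : t ^ γ = t ^ r * t ^ (γ - r) := by
    rw [← Real.rpow_add ht0]; congr 1; ring
  rw [e] at h1
  have hrp : (0:ℝ) < t ^ r := Real.rpow_pos_of_pos ht0 r
  have h1' : K * t ^ r ≤ C * t ^ (γ - r) * t ^ r := by
    rw [mul_assoc, mul_comm (t ^ (γ - r)) (t ^ r)]; exact h1
  have h2 : K ≤ C * t ^ (γ - r) := le_of_mul_le_mul_right h1' hrp
  have h3 : t ^ (γ - r) < a ^ (γ - r) := Real.rpow_lt_rpow ht0.le hta hδ
  have h4 : a ^ (γ - r) = K / C := Real.rpow_inv_rpow (div_pos hK hC0).le hδ.ne'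
  have h5 : C * t ^ (γ - r) < K := by
    calc C * t ^ (γ - r) < C * a ^ (γ - r) := by
          exact mul_lt_mul_of_pos_left h3 hC0
      _ = K := by rw [h4]; field_simp
  linarith
end

section
/- Let θ ∈ (0,1), α > 0, t₀ > 0, and set β(t) = α/t^θ. Let x : [t₀, ∞) → ℝⁿ be a solution of the perturbed inertial ODE with damping β(t). Fix a minimizer x* of F and γ ≥ 1, and define, for t ≥ t₀: E(t) = F(x(t)) − F* + (1/2)‖x'(t)‖² + (2β(t)/(γ+2))⟨x(t) − x*, x'(t)⟩. If F satisfies H1(γ) globally at x*, then for all t ≥ t₀: E'(t) + (2γ/(γ+2))·β(t)·E(t) ≤ (2/(γ+2))·(β'(t) + ((γ−2)/(γ+2))·β(t)²)·⟨x(t) − x*, x'(t)⟩ + ⟨g(t), x'(t) + (2β(t)/(γ+2))(x(t) − x*)⟩. -/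
open MeasureTheory
open scoped RealInnerProductSpace

theorem stmt_16
    {n : ℕ} (hn : 1 ≤ n)
    (F : EuclideanSpace ℝ (Fin n) → ℝ) (Fstar : ℝ)
    (hconv : ConvexOn ℝ Set.univ F)
    (hdiff : Differentiable ℝ F)
    (xstar : EuclideanSpace ℝ (Fin n)) (hmin : ∀ y, F xstar ≤ F y)
    (hFstar : F xstar = Fstar)
    (α t₀ θ γ : ℝ) (hα : 0 < α) (ht₀ : 0 < t₀) (hθ : 0 < θ) (hθ1 : θ < 1) (hγ : 1 ≤ γ)
    (g x x' x'' : ℝ → EuclideanSpace ℝ (Fin n))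
    (hg : ContinuousOn g (Set.Ici t₀))
    (hx : ∀ t ∈ Set.Ici t₀, HasDerivAt x (x' t) t)
    (hx'd : ∀ t ∈ Set.Ici t₀, HasDerivAt x' (x'' t) t)
    (hx''c : ContinuousOn x'' (Set.Ici t₀))
    (hode : ∀ t ∈ Set.Ici t₀, x'' t + (α / t ^ θ) • x' t + gradient F (x t) = g t)
    (hH1 : ∀ y : EuclideanSpace ℝ (Fin n),
      F y - Fstar ≤ (1 / γ) * ⟪gradient F y, y - xstar⟫)
    (E : ℝ → ℝ)
    (hE : ∀ t, E t = F (x t) - Fstar + (1 / 2) * ‖x' t‖ ^ 2 +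
      (2 * (α / t ^ θ) / (γ + 2)) * ⟪x t - xstar, x' t⟫) :
    ∀ t ∈ Set.Ici t₀, ∀ d : ℝ, HasDerivAt E d t →
      d + (2 * γ / (γ + 2)) * (α / t ^ θ) * E t ≤
        (2 / (γ + 2)) * ((-(θ * α) / t ^ (θ + 1)) + ((γ - 2) / (γ + 2)) * (α / t ^ θ) ^ 2) *
          ⟪x t - xstar, x' t⟫ +
        ⟪g t, x' t + (2 * (α / t ^ θ) / (γ + 2)) • (x t - xstar)⟫ := by
  intro t ht d hd
  have ht0 : 0 < t := lt_of_lt_of_le ht₀ ht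
  have hγ0 : (0:ℝ) < γ := lt_of_lt_of_le one_pos hγ
  have hγ2 : (0:ℝ) < γ + 2 := by linarith
  have htθ : (0:ℝ) < t ^ θ := Real.rpow_pos_of_pos ht0 θ
  -- derivative of the damping coefficient
  have hbder : HasDerivAt (fun s : ℝ => 2 * (α / s ^ θ) / (γ + 2))
      (2 * (-(θ * α) / t ^ (θ + 1)) / (γ + 2)) t := by
    have h := Real.hasDerivAt_rpow_const (x := t) (p := θ) (Or.inl (ne_of_gt ht0))
    have h2 := (hasDerivAt_const t α).div h (ne_of_gt htθ)
    have h3 : (0 * t ^ θ - α * (θ * t ^ (θ - 1))) / (t ^ θ) ^ 2 = -(θ * α) / t ^ (θ + 1) := by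
      rw [Real.rpow_add ht0, Real.rpow_sub ht0, Real.rpow_one]
      field_simp
      ring
    rw [h3] at h2
    exact (h2.const_mul 2).div_const (γ + 2)
  -- derivative of F ∘ x
  have h1 : HasDerivAt (fun s => F (x s) - Fstar) ⟪gradient F (x t), x' t⟫ t := by
    have hF : HasFDerivAt F (InnerProductSpace.toDual ℝ _ (gradient F (x t))) (x t) :=
      (hdiff (x t)).hasGradientAt
    have := (hF.comp_hasDerivAt t (hx t ht)).sub_const Fstar
    simpa [InnerProductSpace.toDual_apply_apply] using this
  -- derivative of the kinetic term
  have h2 : HasDerivAt (fun s => (1/2 : ℝ) * ‖x' s‖ ^ 2) ⟪x' t, x'' t⟫ t := by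
    have hi : HasDerivAt (fun s => ⟪x' s, x' s⟫) (⟪x' t, x'' t⟫ + ⟪x'' t, x' t⟫) t :=
      (hx'd t ht).inner ℝ (hx'd t ht)
    have := hi.const_mul (1/2 : ℝ)
    have heq : (fun s => (1/2 : ℝ) * ‖x' s‖ ^ 2) = fun s => (1/2 : ℝ) * ⟪x' s, x' s⟫ := by
      funext s; rw [real_inner_self_eq_norm_sq]
    rw [heq]
    refine this.congr_deriv ?_
    rw [real_inner_comm (x'' t) (x' t)]; ring
  -- derivative of the cross term
  have h3 : HasDerivAt (fun s => (2 * (α / s ^ θ) / (γ + 2)) * ⟪x s - xstar, x' s⟫)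
      ((2 * (-(θ * α) / t ^ (θ + 1)) / (γ + 2)) * ⟪x t - xstar, x' t⟫ +
        (2 * (α / t ^ θ) / (γ + 2)) * (⟪x t - xstar, x'' t⟫ + ⟪x' t, x' t⟫)) t := by
    have hp : HasDerivAt (fun s => ⟪x s - xstar, x' s⟫)
        (⟪x t - xstar, x'' t⟫ + ⟪x' t, x' t⟫) t :=
      ((hx t ht).sub_const xstar).inner ℝ (hx'd t ht)
    exact hbder.mul hp
  have hEder : HasDerivAt E
      (⟪gradient F (x t), x' t⟫ + ⟪x' t, x'' t⟫ +
        ((2 * (-(θ * α) / t ^ (θ + 1)) / (γ + 2)) * ⟪x t - xstar, x' t⟫ +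
          (2 * (α / t ^ θ) / (γ + 2)) * (⟪x t - xstar, x'' t⟫ + ⟪x' t, x' t⟫))) t := by
    have hEfun : E = fun s => F (x s) - Fstar + (1/2 : ℝ) * ‖x' s‖ ^ 2 +
        (2 * (α / s ^ θ) / (γ + 2)) * ⟪x s - xstar, x' s⟫ := funext hE
    rw [hEfun]
    exact (h1.add h2).add h3
  have hdD := hd.unique hEder
  -- substitute the ODE
  have hxx : x'' t = g t - (α / t ^ θ) • x' t - gradient F (x t) := by
    have h := hode t ht
    have : x'' t = g t - ((α / t ^ θ) • x' t + gradient F (x t)) := by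
      rw [← h]; abel
    rw [this]; abel
  have e1 : ⟪x' t, x'' t⟫ = ⟪g t, x' t⟫ - (α / t ^ θ) * ⟪x' t, x' t⟫ -
      ⟪gradient F (x t), x' t⟫ := by
    rw [hxx, inner_sub_right, inner_sub_right, real_inner_smul_right,
      real_inner_comm (x' t) (g t), real_inner_comm (x' t) (gradient F (x t))]
  have e2 : ⟪x t - xstar, x'' t⟫ = ⟪g t, x t - xstar⟫ -
      (α / t ^ θ) * ⟪x t - xstar, x' t⟫ - ⟪gradient F (x t), x t - xstar⟫ := by
    rw [hxx, inner_sub_right, inner_sub_right, real_inner_smul_right,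
      real_inner_comm (x t - xstar) (g t), real_inner_comm (x t - xstar) (gradient F (x t))]
  have e3 : ⟪g t, x' t + (2 * (α / t ^ θ) / (γ + 2)) • (x t - xstar)⟫ =
      ⟪g t, x' t⟫ + (2 * (α / t ^ θ) / (γ + 2)) * ⟪g t, x t - xstar⟫ := by
    rw [inner_add_right, real_inner_smul_right]
  have hnorm : ‖x' t‖ ^ 2 = ⟪x' t, x' t⟫ := (real_inner_self_eq_norm_sq (x' t)).symm
  have hkey : γ * (F (x t) - Fstar) ≤ ⟪gradient F (x t), x t - xstar⟫ := by
    have h := mul_le_mul_of_nonneg_left (hH1 (x t)) (le_of_lt hγ0)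
    have : γ * (1 / γ * ⟪gradient F (x t), x t - xstar⟫) =
        ⟪gradient F (x t), x t - xstar⟫ := by field_simp
    linarith
  rw [hdD, hE t, e1, e2, e3, hnorm]
  set b := α / t ^ θ with hbdef
  set b' := -(θ * α) / t ^ (θ + 1) with hb'def
  set p := ⟪x t - xstar, x' t⟫
  set sq := ⟪x' t, x' t⟫
  set A := ⟪gradient F (x t), x' t⟫
  set G := ⟪gradient F (x t), x t - xstar⟫
  set gp := ⟪g t, x' t⟫
  set gq := ⟪g t, x t - xstar⟫
  set Fv := F (x t) - Fstar
  have hb : 0 < b := by rw [hbdef]; positivity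
  have hident : A + (gp - b * sq - A) +
      (2 * b' / (γ + 2) * p + 2 * b / (γ + 2) * ((gq - b * p - G) + sq)) +
      2 * γ / (γ + 2) * b * (Fv + 1 / 2 * sq + 2 * b / (γ + 2) * p) =
      (2 / (γ + 2) * (b' + (γ - 2) / (γ + 2) * b ^ 2) * p +
        (gp + 2 * b / (γ + 2) * gq)) + (2 * b / (γ + 2)) * (γ * Fv - G) := by
    field_simp
    ring
  have hnonpos : (2 * b / (γ + 2)) * (γ * Fv - G) ≤ 0 :=
    mul_nonpos_of_nonneg_of_nonpos (by positivity) (by linarith)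
  linarith [hident]
end

section
/- Let θ ∈ [0,1], α > 0, t₀ > 0, and let x : [t₀, ∞) → ℝⁿ be a solution of the unperturbed inertial ODE (g ≡ 0) with damping α/t^θ. Fix a minimizer x* of F, real numbers λ ≥ 0 and p, and set ξ(t) = λ(λ + 1 − α t^{1−θ}). Define, for t ≥ t₀: a(t) = t(F(x(t)) − F*), b(t) = (1/(2t))‖λ(x(t) − x*) + t·x'(t)‖², c(t) = (1/(2t))‖x(t) − x*‖², E(t) = t(a(t) + b(t) + ξ(t)·c(t)), and H(t) = t^p E(t). If F satisfies H1(γ₁) globally at x* for some γ₁ ≥ 1, then for all t ≥ t₀: H'(t) ≤ t^p [ (2 + p − γ₁λ)·a(t) + (2λ + 2 + p − 2α t^{1−θ})·b(t) + λ((λ+1)(p − 2λ) − α(p + 1 − θ − 2λ)·t^{1−θ})·c(t) ]. -/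
open MeasureTheory
open scoped RealInnerProductSpace

set_option maxHeartbeats 2000000 in
theorem stmt_17
    {n : ℕ} (hn : 1 ≤ n)
    (F : EuclideanSpace ℝ (Fin n) → ℝ) (Fstar : ℝ)
    (hconv : ConvexOn ℝ Set.univ F)
    (hdiff : Differentiable ℝ F)
    (xstar : EuclideanSpace ℝ (Fin n)) (hmin : ∀ y, F xstar ≤ F y)
    (hFstar : F xstar = Fstar)
    (α t₀ θ γ₁ lam p : ℝ) (hα : 0 < α) (ht₀ : 0 < t₀) (hθ : 0 ≤ θ) (hθ1 : θ ≤ 1)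
    (hγ₁ : 1 ≤ γ₁) (hlam : 0 ≤ lam)
    (x x' x'' : ℝ → EuclideanSpace ℝ (Fin n))
    (hx : ∀ t ∈ Set.Ici t₀, HasDerivAt x (x' t) t)
    (hx'd : ∀ t ∈ Set.Ici t₀, HasDerivAt x' (x'' t) t)
    (hx''c : ContinuousOn x'' (Set.Ici t₀))
    (hode : ∀ t ∈ Set.Ici t₀, x'' t + (α / t ^ θ) • x' t + gradient F (x t) = 0)
    (hH1 : ∀ y : EuclideanSpace ℝ (Fin n),
      F y - Fstar ≤ (1 / γ₁) * ⟪gradient F y, y - xstar⟫)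
    (a b c E H : ℝ → ℝ)
    (ha : ∀ t, a t = t * (F (x t) - Fstar))
    (hb : ∀ t, b t = (1 / (2 * t)) * ‖lam • (x t - xstar) + t • x' t‖ ^ 2)
    (hc : ∀ t, c t = (1 / (2 * t)) * ‖x t - xstar‖ ^ 2)
    (hE : ∀ t, E t = t * (a t + b t + (lam * (lam + 1 - α * t ^ (1 - θ))) * c t))
    (hH : ∀ t, H t = t ^ p * E t) :
    ∀ t ∈ Set.Ici t₀, ∀ d : ℝ, HasDerivAt H d t →
      d ≤ t ^ p * ((2 + p - γ₁ * lam) * a t +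
        (2 * lam + 2 + p - 2 * α * t ^ (1 - θ)) * b t +
        lam * ((lam + 1) * (p - 2 * lam) - α * (p + 1 - θ - 2 * lam) * t ^ (1 - θ)) * c t) := by
  intro t ht d hd
  have ht0 : (0:ℝ) < t := lt_of_lt_of_le ht₀ ht
  have htne : t ≠ 0 := ne_of_gt ht0
  have hγpos : (0:ℝ) < γ₁ := lt_of_lt_of_le one_pos hγ₁
  have hxt := hx t ht
  have hxt' := hx'd t ht
  -- ODE rearranged
  have hxdd : x'' t = (-(α / t ^ θ)) • x' t + (-1:ℝ) • gradient F (x t) := by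
    have h := hode t ht
    rw [neg_smul, neg_one_smul]
    have h2 : x'' t + ((α / t ^ θ) • x' t + gradient F (x t)) = 0 := by
      rw [← add_assoc]; exact h
    simpa [sub_eq_add_neg, neg_add, add_comm] using eq_neg_of_add_eq_zero_left h2
  -- derivative of F ∘ x
  have hFx : HasDerivAt (fun τ => F (x τ)) ⟪gradient F (x t), x' t⟫ t := by
    have h1 := ((hdiff (x t)).hasGradientAt.hasFDerivAt).comp_hasDerivAt t hxt
    rw [InnerProductSpace.toDual_apply_apply] at h1
    exact h1
  have hu := ((hxt.sub_const xstar).const_smul lam).add ((hasDerivAt_id t).smul hxt')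
  have huu := HasDerivAt.inner ℝ hu hu
  have hvv := HasDerivAt.inner ℝ (hxt.sub_const xstar) (hxt.sub_const xstar)
  have hinv : HasDerivAt (fun τ => 1/(2*τ)) (-(2*1) / (2*t)^2) t := by
    have h := (((hasDerivAt_id t).const_mul (2:ℝ)).inv (by positivity))
    have e : (fun τ : ℝ => 1/(2*τ)) = (fun y => 2 * id y)⁻¹ := by
      funext τ
      simp only [Pi.inv_apply, one_div, id_eq]
    rw [e]
    exact h
  have hS : HasDerivAt (fun τ => τ ^ (1-θ)) ((1-θ) * t^(1-θ-1)) t :=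
    Real.hasDerivAt_rpow_const (Or.inl htne)
  have hxi := ((hS.const_mul α).const_sub (lam+1)).const_mul lam
  have hA : HasDerivAt (fun τ => τ * (F (x τ) - Fstar))
      (1 * (F (x t) - Fstar) + t * ⟪gradient F (x t), x' t⟫) t :=
    (hasDerivAt_id t).mul (hFx.sub_const Fstar)
  have hbig := (Real.hasDerivAt_rpow_const (p := p) (Or.inl htne)).mul
    ((hasDerivAt_id t).mul ((hA.add (hinv.mul huu)).add (hxi.mul (hinv.mul hvv))))
  have hHfun : H = fun τ => τ ^ p * (τ * (τ * (F (x τ) - Fstar)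
      + (1/(2*τ)) * ⟪lam • (x τ - xstar) + τ • x' τ, lam • (x τ - xstar) + τ • x' τ⟫
      + lam * (lam + 1 - α * τ ^ (1-θ)) * ((1/(2*τ)) * ⟪x τ - xstar, x τ - xstar⟫))) := by
    funext τ
    simp only [hH, hE, ha, hb, hc, real_inner_self_eq_norm_sq]
  rw [hHfun] at hd
  have hde := hd.unique hbig
  -- rpow algebra
  have hts : t ^ θ * t ^ (1-θ) = t := by
    rw [← Real.rpow_add ht0]; norm_num
  have e1 : t ^ (p-1) = t ^ p / t := by rw [Real.rpow_sub ht0, Real.rpow_one]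
  have e2 : t ^ (1-θ-1) = t ^ (1-θ) / t := by rw [Real.rpow_sub ht0, Real.rpow_one]
  have e3 : α / t ^ θ = α * t ^ (1-θ) / t := by
    rw [div_eq_div_iff (by positivity) htne, mul_assoc, mul_comm (t ^ (1-θ)), hts]
  have key : γ₁ * (F (x t) - Fstar) ≤ ⟪gradient F (x t), x t - xstar⟫ := by
    have h := mul_le_mul_of_nonneg_left (hH1 (x t)) hγpos.le
    have h2 : γ₁ * (1 / γ₁ * ⟪gradient F (x t), x t - xstar⟫)
        = ⟪gradient F (x t), x t - xstar⟫ := by field_simp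
    linarith [h, h2.le, h2.ge]
  have hfact : 0 ≤ t ^ p * (lam * t * (⟪gradient F (x t), x t - xstar⟫
      - γ₁ * (F (x t) - Fstar))) :=
    mul_nonneg (Real.rpow_pos_of_pos ht0 p).le
      (mul_nonneg (mul_nonneg hlam ht0.le) (sub_nonneg.2 key))
  have hgoal : d + t ^ p * (lam * t * (⟪gradient F (x t), x t - xstar⟫
      - γ₁ * (F (x t) - Fstar)))
      = t ^ p * ((2 + p - γ₁ * lam) * a t +
        (2 * lam + 2 + p - 2 * α * t ^ (1 - θ)) * b t +
        lam * ((lam + 1) * (p - 2 * lam) - α * (p + 1 - θ - 2 * lam) * t ^ (1 - θ)) * c t) := by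
    rw [hde, hxdd]
    simp only [ha, hb, hc, ← real_inner_self_eq_norm_sq]
    simp only [id_eq, Pi.add_apply, Pi.smul_apply, Pi.smul_apply', Pi.mul_apply, inner_add_left, inner_add_right,
      real_inner_smul_left, real_inner_smul_right, one_smul]
    simp only [real_inner_comm (x t - xstar) (gradient F (x t)),
      real_inner_comm (x' t) (x t - xstar), real_inner_comm (x' t) (gradient F (x t))]
    rw [e1, e2, e3]
    set G := ⟪gradient F (x t), x t - xstar⟫ with hG
    set P := ⟪gradient F (x t), x' t⟫ with hP
    set I1 := ⟪x t - xstar, x t - xstar⟫ with hI1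
    set I2 := ⟪x t - xstar, x' t⟫ with hI2
    set I3 := ⟪x' t, x' t⟫ with hI3
    set f0 := F (x t) - Fstar with hf0
    set r := t ^ p with hr
    set s := t ^ (1 - θ) with hs
    field_simp
    ring
  linarith [hfact, hgoal]
end

section
/- Let t₀ > 0, θ ∈ [0,1], r = (1 + θ)/2 and γ₂ > 2, and set p₂ = 4r/(γ₂ − 2). Let x : [t₀, ∞) → ℝⁿ be any curve, let x* be the unique minimizer of F, and define a(t) = t(F(x(t)) − F*) and c(t) = (1/(2t))‖x(t) − x*‖². Suppose F satisfies the global growth condition K‖y − x*‖^{γ₂} ≤ F(y) − F* for all y ∈ ℝⁿ, for some K > 0. Then for every m ∈ ℝ there exists M ∈ ℝ such that for all t ≥ t₀: m·t^{p₂+1}·c(t) − t^{p₂+2r−1}·a(t) ≤ M. -/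
open MeasureTheory
open scoped RealInnerProductSpace

lemma aux_bdd_19 (K γ m : ℝ) (hK : 0 < K) (hγ : 2 < γ) :
    ∃ M : ℝ, ∀ s : ℝ, 0 ≤ s → m * s ^ 2 - K * s ^ γ ≤ M := by
  set S : ℝ := max 1 ((|m| / K + 1) ^ (γ - 2)⁻¹) with hSdef
  have hS1 : (1 : ℝ) ≤ S := le_max_left _ _
  have hS0 : (0 : ℝ) ≤ S := by linarith
  refine ⟨|m| * S ^ 2, fun s hs => ?_⟩
  rcases le_or_gt s S with h | h
  · have h1 : m * s ^ 2 ≤ |m| * S ^ 2 := by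
      have ha1 : m * s ^ 2 ≤ |m| * s ^ 2 :=
        mul_le_mul_of_nonneg_right (le_abs_self m) (sq_nonneg s)
      have ha2 : |m| * s ^ 2 ≤ |m| * S ^ 2 :=
        mul_le_mul_of_nonneg_left (pow_le_pow_left₀ hs h 2) (abs_nonneg m)
      linarith
    have h2 : 0 ≤ K * s ^ γ := mul_nonneg hK.le (Real.rpow_nonneg hs _)
    linarith
  · have hs1 : (1 : ℝ) ≤ s := le_trans hS1 h.le
    have hs0 : (0 : ℝ) < s := by linarith
    have hγ2 : (0 : ℝ) < γ - 2 := by linarith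
    have hb0 : (0 : ℝ) ≤ |m| / K + 1 := by positivity
    have hmono : S ^ (γ - 2) ≤ s ^ (γ - 2) :=
      Real.rpow_le_rpow hS0 h.le hγ2.le
    have hbase : (|m| / K + 1) ^ (γ - 2)⁻¹ ≤ S := le_max_right _ _
    have hSpow : |m| / K + 1 ≤ S ^ (γ - 2) := by
      have h3 := Real.rpow_le_rpow (Real.rpow_nonneg hb0 _) hbase hγ2.le
      rwa [← Real.rpow_mul hb0, inv_mul_cancel₀ hγ2.ne', Real.rpow_one] at h3
    have hsplit : s ^ γ = s ^ (γ - 2) * s ^ 2 := by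
      rw [← Real.rpow_two, ← Real.rpow_add hs0]
      ring_nf
    have hKm : K * (|m| / K) = |m| := by field_simp
    have hfinal : K * s ^ γ ≥ m * s ^ 2 := by
      rw [hsplit]
      have h4 : |m| / K + 1 ≤ s ^ (γ - 2) := le_trans hSpow hmono
      have h5 : |m| + K ≤ K * s ^ (γ - 2) := by
        have h6 := mul_le_mul_of_nonneg_left h4 hK.le
        rw [mul_add, hKm, mul_one] at h6
        linarith
      nlinarith [sq_nonneg s, le_abs_self m, h5,
        mul_le_mul_of_nonneg_right h5 (sq_nonneg s)]
    have h7 : 0 ≤ |m| * S ^ 2 := mul_nonneg (abs_nonneg m) (sq_nonneg S)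
    linarith

theorem stmt_19
    {n : ℕ} (hn : 1 ≤ n)
    (F : EuclideanSpace ℝ (Fin n) → ℝ) (Fstar : ℝ)
    (hconv : ConvexOn ℝ Set.univ F)
    (hdiff : Differentiable ℝ F)
    (xstar : EuclideanSpace ℝ (Fin n)) (hmin : ∀ y, F xstar ≤ F y)
    (huniq : ∀ y, (∀ z, F y ≤ F z) → y = xstar)
    (hFstar : F xstar = Fstar)
    (t₀ θ γ₂ r p₂ : ℝ) (ht₀ : 0 < t₀) (hθ : 0 ≤ θ) (hθ1 : θ ≤ 1) (hγ₂ : 2 < γ₂)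
    (hr : r = (1 + θ) / 2) (hp₂ : p₂ = 4 * r / (γ₂ - 2))
    (x : ℝ → EuclideanSpace ℝ (Fin n))
    (K : ℝ) (hK : 0 < K)
    (hgrowth : ∀ y : EuclideanSpace ℝ (Fin n), K * ‖y - xstar‖ ^ γ₂ ≤ F y - Fstar)
    (a c : ℝ → ℝ)
    (ha : ∀ t, a t = t * (F (x t) - Fstar))
    (hc : ∀ t, c t = (1 / (2 * t)) * ‖x t - xstar‖ ^ 2)
    :
    ∀ m : ℝ, ∃ M : ℝ, ∀ t ≥ t₀,
      m * (t ^ (p₂ + 1) * c t) - t ^ (p₂ + 2 * r - 1) * a t ≤ M := by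
  intro m
  obtain ⟨M, hM⟩ := aux_bdd_19 K γ₂ (m / 2) hK hγ₂
  refine ⟨M, fun t ht => ?_⟩
  have ht0 : 0 < t := lt_of_lt_of_le ht₀ ht
  set u : ℝ := ‖x t - xstar‖ with hu
  have hu0 : 0 ≤ u := norm_nonneg _
  have hγ2 : (0 : ℝ) < γ₂ - 2 := by linarith
  set s : ℝ := t ^ (p₂ / 2) * u with hsdef
  have hs0 : 0 ≤ s := mul_nonneg (Real.rpow_nonneg ht0.le _) hu0
  have key := hM s hs0
  -- s ^ 2 = t ^ p₂ * u ^ 2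
  have e1 : s ^ 2 = t ^ p₂ * u ^ 2 := by
    have : (t ^ (p₂ / 2)) ^ 2 = t ^ p₂ := by
      rw [← Real.rpow_natCast (t ^ (p₂ / 2)) 2, ← Real.rpow_mul ht0.le]
      norm_num
    rw [hsdef, mul_pow, this]
  -- s ^ γ₂ = t ^ (p₂ + 2*r) * u ^ γ₂
  have hexp : p₂ / 2 * γ₂ = p₂ + 2 * r := by
    rw [hp₂]
    field_simp
    ring
  have e2 : s ^ γ₂ = t ^ (p₂ + 2 * r) * u ^ γ₂ := by
    rw [hsdef, Real.mul_rpow (Real.rpow_nonneg ht0.le _) hu0,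
      ← Real.rpow_mul ht0.le, hexp]
  -- LHS computations
  have lhs1 : m * (t ^ (p₂ + 1) * c t) = m / 2 * s ^ 2 := by
    rw [hc t, e1, Real.rpow_add ht0, Real.rpow_one]
    field_simp
    ring
  have lhs2 : t ^ (p₂ + 2 * r - 1) * a t = t ^ (p₂ + 2 * r) * (F (x t) - Fstar) := by
    rw [ha t]
    rw [show p₂ + 2 * r = (p₂ + 2 * r - 1) + 1 by ring, Real.rpow_add ht0, Real.rpow_one]
    ring
  have hgr : K * s ^ γ₂ ≤ t ^ (p₂ + 2 * r) * (F (x t) - Fstar) := by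
    rw [e2]
    have hg := hgrowth (x t)
    have htp : (0 : ℝ) ≤ t ^ (p₂ + 2 * r) := Real.rpow_nonneg ht0.le _
    calc K * (t ^ (p₂ + 2 * r) * u ^ γ₂) = t ^ (p₂ + 2 * r) * (K * u ^ γ₂) := by ring
      _ ≤ t ^ (p₂ + 2 * r) * (F (x t) - Fstar) := by
          exact mul_le_mul_of_nonneg_left hg htp
  rw [lhs1, lhs2]
  linarith
end
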